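/- arXiv:2210.11700 — 3 statements merged into one kernel-verified Lean document; each statement's English description precedes it below -/
import Mathlib

section
/- For an odd positive integer n, the dihedral group D_{2n} of order 2n is homogeneous: for any two subgroups H and K of D_{2n}, every isomorphism from H to K extends to an automorphism of D_{2n}. -/
/-- The Cayley digraph relation of `G` with connection set `S`:
there is an arc from `x` to `y` iff `y = s * x` for some `s ∈ S`. -/
def cayRel {G : Type*} [Group G] (S : Set G) : G → G → Prop :=
  fun x y => y * x⁻¹ ∈ S

/-- The automorphism group of the Cayley digraph `Cay(G,S)`,
as a subgroup of the permutations of the vertex set `G`. -/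
def cayAut {G : Type*} [Group G] (S : Set G) : Subgroup (Equiv.Perm G) where
  carrier := {f | ∀ x y, cayRel S (f x) (f y) ↔ cayRel S x y}
  one_mem' := by intro x y; rfl
  mul_mem' := by
    intro f g hf hg x y
    rw [Equiv.Perm.mul_apply, Equiv.Perm.mul_apply, hf, hg]
  inv_mem' := by
    intro f hf x y
    simpa [Equiv.apply_symm_apply] using (hf (f⁻¹ x) (f⁻¹ y)).symm

/-- `Cay(G,S)` is a CI-digraph: any isomorphic Cayley digraph `Cay(G,T)`
is Cayley isomorphic to it. -/
def IsCIDigraph {G : Type*} [Group G] (S : Set G) : Prop :=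
  ∀ T : Set G, (1 : G) ∉ T → Nonempty (cayRel S ≃r cayRel T) →
    ∃ α : G ≃* G, α '' S = T

/-- `G` has the `m`-DCI property: every Cayley digraph of `G` of out-valency `m`
is a CI-digraph. -/
def HasDCI (G : Type*) [Group G] (m : ℕ) : Prop :=
  ∀ S : Set G, (1 : G) ∉ S → S.ncard = m → IsCIDigraph S

/-- The right regular representation `R(G)` as a subgroup of `Perm G`. -/
def rightReg (G : Type*) [Group G] : Subgroup (Equiv.Perm G) where
  carrier := Set.range fun g : G => Equiv.mulRight g
  one_mem' := ⟨1, by ext x; simp⟩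
  mul_mem' := by
    rintro _ _ ⟨g, rfl⟩ ⟨h, rfl⟩
    exact ⟨h * g, by ext x; simp [mul_assoc]⟩
  inv_mem' := by
    rintro _ ⟨g, rfl⟩
    exact ⟨g⁻¹, by ext x; simp [Equiv.Perm.inv_def]⟩

/-- A subgroup of permutations of `V` is regular if for all `x y : V` there is a
unique element sending `x` to `y`. -/
def IsRegularSubgroup {V : Type*} (H : Subgroup (Equiv.Perm V)) : Prop :=
  ∀ x y : V, ∃! h : H, (h : Equiv.Perm V) x = y


open DihedralGroup

namespace StmtAux

variable {n : ℕ}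

def dmap (k m : ZMod n) : DihedralGroup n → DihedralGroup n
  | .r i => .r (k * i)
  | .sr i => .sr (k * i + m)

@[simp] lemma dmap_r (k m i : ZMod n) : dmap k m (r i) = r (k * i) := rfl
@[simp] lemma dmap_sr (k m i : ZMod n) : dmap k m (sr i) = sr (k * i + m) := rfl

def dihAut (k : (ZMod n)ˣ) (m : ZMod n) : DihedralGroup n ≃* DihedralGroup n where
  toFun := dmap (k : ZMod n) m
  invFun := dmap ((k⁻¹ : (ZMod n)ˣ) : ZMod n) (-(((k⁻¹ : (ZMod n)ˣ) : ZMod n) * m))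
  left_inv := by rintro (i | i) <;> simp [dmap, ← mul_assoc, mul_add]
  right_inv := by rintro (i | i) <;> simp [dmap, ← mul_assoc, mul_add]
  map_mul' := by rintro (i | i) (j | j) <;> simp [dmap, mul_add, mul_sub] <;> ring_nf

lemma r_pow (i : ZMod n) (t : ℕ) : (r i : DihedralGroup n) ^ t = r (t • i) := by
  induction t with
  | zero => rw [pow_zero, zero_nsmul, one_def]
  | succ t ih => rw [pow_succ, ih, r_mul_r, succ_nsmul]

lemma r_zpow (i : ZMod n) (t : ℤ) : (r i : DihedralGroup n) ^ t = r (t • i) := by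
  cases t with
  | ofNat t => simp [r_pow, mul_comm]
  | negSucc t => rw [zpow_negSucc, r_pow, negSucc_zsmul]; rfl

lemma orderOf_r' [NeZero n] (i : ZMod n) : orderOf (r i : DihedralGroup n) = addOrderOf i := by
  rw [DihedralGroup.orderOf_r, ← ZMod.natCast_zmod_val i, ZMod.addOrderOf_coe _ (NeZero.ne n),
    ZMod.natCast_zmod_val]

lemma exists_unit_rep [NeZero n] (a : ZMod n) :
    ∃ u : (ZMod n)ˣ, (u : ZMod n) * ((n.gcd a.val : ℕ) : ZMod n) = a := by
  set e : ℕ := n.gcd a.val with he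
  have hepos : 0 < e := Nat.gcd_pos_of_pos_left _ (NeZero.pos n)
  have hedvdn : e ∣ n := Nat.gcd_dvd_left _ _
  have hedvda : e ∣ a.val := Nat.gcd_dvd_right _ _
  set d : ℕ := n / e with hd
  have hddvd : d ∣ n := Nat.div_dvd_of_dvd hedvdn
  set b : ℕ := a.val / e with hb
  have hcop : Nat.Coprime b d := (Nat.coprime_div_gcd_div_gcd (m := n) (n := a.val) hepos).symm
  obtain ⟨u, hu⟩ := ZMod.unitsMap_surjective hddvd (ZMod.unitOfCoprime b hcop)
  refine ⟨u, ?_⟩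
  -- castHom equation to ModEq
  have h1 : ((ZMod.castHom hddvd (ZMod d)) (u : ZMod n) : ZMod d) = (b : ZMod d) := by
    have := congrArg (Units.val) hu
    simpa [ZMod.unitsMap_def] using this
  have h2 : (((u : ZMod n).val : ℕ) : ZMod d) = (b : ZMod d) := by
    rwa [ZMod.castHom_apply, ← ZMod.natCast_val] at h1
  have h3 : (u : ZMod n).val ≡ b [MOD d] := (ZMod.natCast_eq_natCast_iff _ _ _).mp h2
  have h4 : e * (u : ZMod n).val ≡ e * b [MOD n] := by
    have := h3.mul_left' (c := e)
    rwa [show e * d = n from Nat.mul_div_cancel' hedvdn] at this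
  have h5 : e * b = a.val := Nat.mul_div_cancel' hedvda
  have h6 : ((e * (u : ZMod n).val : ℕ) : ZMod n) = ((a.val : ℕ) : ZMod n) := by
    rw [(ZMod.natCast_eq_natCast_iff _ _ _).mpr h4, h5]
  calc (u : ZMod n) * ((e : ℕ) : ZMod n)
      = (((u : ZMod n).val : ℕ) : ZMod n) * ((e : ℕ) : ZMod n) := by rw [ZMod.natCast_zmod_val]
    _ = ((e * (u : ZMod n).val : ℕ) : ZMod n) := by push_cast; ring
    _ = a := by rw [h6, ZMod.natCast_zmod_val]

lemma exists_unit_mul [NeZero n] (g h : ZMod n) (hgh : addOrderOf g = addOrderOf h) :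
    ∃ k : (ZMod n)ˣ, (k : ZMod n) * g = h := by
  have horder : ∀ a : ZMod n, addOrderOf a = n / n.gcd a.val := by
    intro a
    rw [← ZMod.natCast_zmod_val a, ZMod.addOrderOf_coe _ (NeZero.ne n), ZMod.natCast_zmod_val]
  have hgcd : n.gcd g.val = n.gcd h.val := by
    have h1 := horder g
    have h2 := horder h
    have hg' : n.gcd g.val ∣ n := Nat.gcd_dvd_left _ _
    have hh' : n.gcd h.val ∣ n := Nat.gcd_dvd_left _ _
    have e1 : n.gcd g.val * (n / n.gcd g.val) = n := Nat.mul_div_cancel' hg'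
    have e2 : n.gcd h.val * (n / n.gcd h.val) = n := Nat.mul_div_cancel' hh'
    have hq : n / n.gcd g.val = n / n.gcd h.val := by rw [← h1, ← h2, hgh]
    have hqpos : 0 < n / n.gcd g.val :=
      Nat.div_pos (Nat.le_of_dvd (NeZero.pos n) hg') (Nat.gcd_pos_of_pos_left _ (NeZero.pos n))
    have := e1.trans e2.symm
    rw [← hq] at this
    exact Nat.eq_of_mul_eq_mul_right hqpos this
  obtain ⟨u, hu⟩ := exists_unit_rep g
  obtain ⟨v, hv⟩ := exists_unit_rep h
  refine ⟨v * u⁻¹, ?_⟩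
  have : ((u⁻¹ : (ZMod n)ˣ) : ZMod n) * g = ((n.gcd g.val : ℕ) : ZMod n) := by
    nth_rewrite 1 [← hu]
    rw [← mul_assoc]
    simp
  push_cast [Units.val_mul]
  rw [mul_assoc, this, hgcd, hv]

/-- rotation part of a subgroup, as an additive subgroup of `ZMod n` -/
def rotA (H : Subgroup (DihedralGroup n)) : AddSubgroup (ZMod n) where
  carrier := {i : ZMod n | DihedralGroup.r i ∈ H}
  zero_mem' := by simpa [← one_def] using H.one_mem
  add_mem' := by
    intro i j hi hj
    simpa using H.mul_mem hi hj
  neg_mem' := by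
    intro i hi
    exact H.inv_mem hi

@[simp] lemma dihAut_apply (k : (ZMod n)ˣ) (m : ZMod n) (x : DihedralGroup n) :
    dihAut k m x = dmap (k : ZMod n) m x := rfl

lemma mem_rotA {H : Subgroup (DihedralGroup n)} {i : ZMod n} :
    i ∈ rotA H ↔ DihedralGroup.r i ∈ H := Iff.rfl

end StmtAux

open StmtAux

/-- For odd `n`, the dihedral group `D_{2n}` is homogeneous: every
isomorphism between two subgroups extends to an automorphism of the whole group. -/
theorem stmt1 (n : ℕ) (hpos : 0 < n) (hodd : Odd n)
    (H K : Subgroup (DihedralGroup n)) (phi : H ≃* K) :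
    ∃ α : DihedralGroup n ≃* DihedralGroup n,
      ∀ h : H, α (h : DihedralGroup n) = ((phi h : K) : DihedralGroup n) := by
  haveI : NeZero n := ⟨hpos.ne'⟩
  have hndvd2 : ¬ (2 ∣ n) := by
    rw [Nat.odd_iff] at hodd; omega
  -- orders in ZMod n divide n
  have haord : ∀ a : ZMod n, addOrderOf a ∣ n := by
    intro a
    rw [addOrderOf_dvd_iff_nsmul_eq_zero]
    simp [nsmul_eq_mul]
  -- phi sends rotations to rotations
  have hrot : ∀ (i : ZMod n) (hi : r i ∈ H), ∃ l : ZMod n,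
      ((phi ⟨r i, hi⟩ : K) : DihedralGroup n) = r l ∧ addOrderOf l = addOrderOf i := by
    intro i hi
    have hord : orderOf ((phi ⟨r i, hi⟩ : K) : DihedralGroup n) = addOrderOf i :=
      calc orderOf ((phi ⟨r i, hi⟩ : K) : DihedralGroup n)
          = orderOf (phi ⟨r i, hi⟩) := orderOf_submonoid _
        _ = orderOf (⟨r i, hi⟩ : H) := MulEquiv.orderOf_eq phi _
        _ = orderOf (r i : DihedralGroup n) := (orderOf_submonoid _).symm
        _ = addOrderOf i := orderOf_r' i
    rcases hy : ((phi ⟨r i, hi⟩ : K) : DihedralGroup n) with l | l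
    · exact ⟨l, rfl, by rw [hy, orderOf_r'] at hord; omega⟩
    · exfalso
      rw [hy, orderOf_sr] at hord
      exact hndvd2 (hord ▸ haord i)
  -- phi sends reflections to reflections
  have href : ∀ (j : ZMod n) (hj : sr j ∈ H), ∃ l : ZMod n,
      ((phi ⟨sr j, hj⟩ : K) : DihedralGroup n) = sr l := by
    intro j hj
    have hord : orderOf ((phi ⟨sr j, hj⟩ : K) : DihedralGroup n) = 2 :=
      calc orderOf ((phi ⟨sr j, hj⟩ : K) : DihedralGroup n)
          = orderOf (phi ⟨sr j, hj⟩) := orderOf_submonoid _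
        _ = orderOf (⟨sr j, hj⟩ : H) := MulEquiv.orderOf_eq phi _
        _ = orderOf (sr j : DihedralGroup n) := (orderOf_submonoid _).symm
        _ = 2 := orderOf_sr j
    rcases hy : ((phi ⟨sr j, hj⟩ : K) : DihedralGroup n) with l | l
    · exfalso
      rw [hy, orderOf_r'] at hord
      exact hndvd2 (hord ▸ haord l)
    · exact ⟨l, rfl⟩
  -- generator of the rotation part
  obtain ⟨g, hg⟩ := IsAddCyclic.exists_generator (α := rotA H)
  set gv : ZMod n := (g : ZMod n) with hgv
  have hgH : r gv ∈ H := g.2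
  obtain ⟨hv, hhv, hvord⟩ := hrot gv hgH
  obtain ⟨k, hk⟩ := exists_unit_mul gv hv hvord.symm
  -- each rotation in H is a power of r gv, and we compute phi on it
  have key : ∀ (i : ZMod n) (hi : r i ∈ H),
      ((phi ⟨r i, hi⟩ : K) : DihedralGroup n) = r ((k : ZMod n) * i) := by
    intro i hi
    obtain ⟨t, ht⟩ := AddSubgroup.mem_zmultiples_iff.mp (hg ⟨i, hi⟩)
    have hti : t • gv = i := by
      have := congrArg (Subtype.val) ht
      simpa [hgv] using this
    have hpow : (⟨r i, hi⟩ : H) = (⟨r gv, hgH⟩ : H) ^ t := by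
      apply Subtype.ext
      rw [SubgroupClass.coe_zpow]
      simp only [StmtAux.r_zpow, hti]
    rw [hpow, map_zpow, SubgroupClass.coe_zpow, hhv, StmtAux.r_zpow]
    congr 1
    rw [← hti, ← hk, zsmul_eq_mul, zsmul_eq_mul]
    ring
  by_cases hsr : ∃ j : ZMod n, sr j ∈ H
  · obtain ⟨j, hj⟩ := hsr
    obtain ⟨l, hl⟩ := href j hj
    refine ⟨dihAut k (l - (k : ZMod n) * j), ?_⟩
    rintro ⟨(i | i), hx⟩
    · rw [dihAut_apply, dmap_r, ← key i hx]
    · -- sr i = sr j * r (i - j)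
      have hmem : r (i - j) ∈ H := by
        have := H.mul_mem hj hx
        simpa using this
      have hsplit : (⟨sr i, hx⟩ : H) = ⟨sr j, hj⟩ * ⟨r (i - j), hmem⟩ := by
        apply Subtype.ext
        show (sr i : DihedralGroup n) = sr j * r (i - j)
        rw [sr_mul_r]
        congr 1
        ring
      rw [dihAut_apply, dmap_sr, hsplit, map_mul]
      push_cast
      rw [hl, key (i - j) hmem, sr_mul_r]
      congr 1
      ring
  · refine ⟨dihAut k 0, ?_⟩
    rintro ⟨(i | i), hx⟩
    · rw [dihAut_apply, dmap_r, ← key i hx]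
    · exact absurd ⟨i, hx⟩ hsr
end

section
/- Let n = q^r with q prime and r ≥ 2, and suppose D_{2n} has the m-DCI property for some 1 ≤ m ≤ n−1. Then q is odd and m ≤ q. -/
open DihedralGroup Finset

variable {n : ℕ}

-- inverse formulas
lemma r_inv (a : ZMod n) : (r a)⁻¹ = r (-a) := by
  apply inv_eq_of_mul_eq_one_right; simp [one_def, -r_zero]

lemma sr_inv (a : ZMod n) : (sr a)⁻¹ = sr a := by
  apply inv_eq_of_mul_eq_one_right; simp [one_def, -r_zero]

/-- sets built from two index finsets -/
def dset (A B : Finset (ZMod n)) : Set (DihedralGroup n) :=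
  ↑(A.image DihedralGroup.r ∪ B.image DihedralGroup.sr)

lemma mem_dset_r {A B : Finset (ZMod n)} {z : ZMod n} : r z ∈ dset A B ↔ z ∈ A := by
  simp [dset]

lemma mem_dset_sr {A B : Finset (ZMod n)} {z : ZMod n} : sr z ∈ dset A B ↔ z ∈ B := by
  simp [dset]

lemma ncard_dset (A B : Finset (ZMod n)) :
    (dset A B).ncard = A.card + B.card := by
  rw [dset, Set.ncard_coe_finset, card_union_of_disjoint, card_image_of_injective _ (fun a b H => by injection H), card_image_of_injective _ (fun a b H => by injection H)]
  simp [Finset.disjoint_left]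

lemma one_notin_dset {A B : Finset (ZMod n)} (h0 : (0 : ZMod n) ∉ A) :
    (1 : DihedralGroup n) ∉ dset A B := by
  rw [one_def, mem_dset_r]; exact h0

-- cayRel computations
lemma cayRel_rr (S : Set (DihedralGroup n)) (a b : ZMod n) :
    cayRel S (r a) (r b) ↔ r (b - a) ∈ S := by
  unfold cayRel; rw [r_inv]; norm_num [sub_eq_add_neg]

lemma cayRel_ss (S : Set (DihedralGroup n)) (a b : ZMod n) :
    cayRel S (sr a) (sr b) ↔ r (a - b) ∈ S := by
  unfold cayRel; rw [sr_inv]; norm_num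

lemma cayRel_rs (S : Set (DihedralGroup n)) (a b : ZMod n) :
    cayRel S (r a) (sr b) ↔ sr (b - a) ∈ S := by
  unfold cayRel; rw [r_inv]; norm_num [sub_eq_add_neg]

lemma cayRel_sr (S : Set (DihedralGroup n)) (a b : ZMod n) :
    cayRel S (sr a) (r b) ↔ sr (a - b) ∈ S := by
  unfold cayRel; rw [sr_inv]; norm_num

lemma no_sq_sr (c : ZMod n) (g : DihedralGroup n) : g * g ≠ sr c := by
  rcases g with a | a <;> simp [one_def, -r_zero]

section Q2
-- q = 2 counterexample machinery, parametrized by j k with n = 2^(j+k), j ≥ 1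
variable (j k : ℕ)

local notation "n" => 2^(j+k)
local notation "M" => 2^j

instance : NeZero (2^(j+k)) := ⟨pow_ne_zero _ two_ne_zero⟩
instance : NeZero (2^j) := ⟨pow_ne_zero _ two_ne_zero⟩

def pi2 : ZMod (2^(j+k)) →+* ZMod (2^j) :=
  ZMod.castHom (pow_dvd_pow 2 (Nat.le_add_right j k)) _

lemma pi2_apply (z : ZMod (2^(j+k))) : pi2 j k z = ((z.val : ℕ) : ZMod (2^j)) := by
  conv_lhs => rw [show z = ((z.val : ℕ) : ZMod (2^(j+k))) by simp [ZMod.natCast_val, ZMod.cast_id]]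
  simp [pi2]

lemma pi2_natCast (x : ℕ) : pi2 j k ((x : ℕ) : ZMod (2^(j+k))) = (x : ZMod (2^j)) := by
  simp [pi2]

-- the distinguished element B = 2^(j-1)
def Bm : ZMod (2^j) := ((2^(j-1) : ℕ) : ZMod (2^j))

lemma pow_pred_lt (hj : 1 ≤ j) : 2^(j-1) < 2^j := Nat.pow_lt_pow_right one_lt_two (by omega)

lemma two_pow_pred (hj : 1 ≤ j) : 2^(j-1) + 2^(j-1) = 2^j := by
  have h : j - 1 + 1 = j := by omega
  calc 2^(j-1) + 2^(j-1) = 2^(j-1+1) := by ring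
  _ = 2^j := by rw [h]

lemma Bm_val (hj : 1 ≤ j) : (Bm j).val = 2^(j-1) := ZMod.val_cast_of_lt (pow_pred_lt j hj)

lemma Bm_add_Bm (hj : 1 ≤ j) : Bm j + Bm j = 0 := by
  rw [Bm, ← Nat.cast_add, two_pow_pred j hj, ZMod.natCast_self]

lemma Bm_ne_zero (hj : 1 ≤ j) : Bm j ≠ 0 := by
  intro hB
  have := Bm_val j hj
  rw [hB, ZMod.val_zero] at this
  exact absurd this.symm (by positivity)

lemma val_add_Bm_of_lt (hj : 1 ≤ j) {u : ZMod (2^j)} (hu : u.val < 2^(j-1)) :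
    (u + Bm j).val = u.val + 2^(j-1) := by
  rw [ZMod.val_add, Bm_val j hj, Nat.mod_eq_of_lt (by have := two_pow_pred j hj; omega)]

lemma val_add_Bm_of_ge (hj : 1 ≤ j) {u : ZMod (2^j)} (hu : 2^(j-1) ≤ u.val) :
    (u + Bm j).val = u.val - 2^(j-1) := by
  have h2 := two_pow_pred j hj
  have hlt := u.val_lt
  rw [ZMod.val_add, Bm_val j hj, Nat.mod_eq_sub_mod (by omega), Nat.mod_eq_of_lt (by omega)]
  omega

-- C1 : both small, difference cannot be Bm
lemma diff_ne_Bm_small (hj : 1 ≤ j) {u v : ZMod (2^j)} (hu : u.val < 2^(j-1)) (hv : v.val < 2^(j-1)) :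
    v - u ≠ Bm j := by
  intro hE
  have hv' : v = u + Bm j := by rw [← hE]; ring
  rw [hv', val_add_Bm_of_lt j hj hu] at hv
  omega

-- C3 : both large, difference cannot be Bm
lemma diff_ne_Bm_large (hj : 1 ≤ j) {u v : ZMod (2^j)} (hu : 2^(j-1) ≤ u.val) (hv : 2^(j-1) ≤ v.val) :
    u - v ≠ Bm j := by
  intro hE
  have hu' : u = v + Bm j := by rw [← hE]; ring
  rw [hu', val_add_Bm_of_ge j hj hv] at hu
  have := v.val_lt
  have h2 := two_pow_pred j hj
  omega

-- shifting across Bm flips the window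
lemma lt_add_Bm_iff (hj : 1 ≤ j) (u : ZMod (2^j)) :
    (u + Bm j).val < 2^(j-1) ↔ ¬ (u.val < 2^(j-1)) := by
  by_cases hu : u.val < 2^(j-1)
  · rw [val_add_Bm_of_lt j hj hu]; omega
  · rw [val_add_Bm_of_ge j hj (by omega)]
    have h2 := two_pow_pred j hj
    have := u.val_lt
    omega

end Q2

section Q2sets
open DihedralGroup Finset
variable (j k : ℕ)

lemma MK_eq_n : 2^j * 2^k = 2^(j+k) := (pow_add 2 j k).symm

/-- reflections index set: multiples of M -/
def Kf : Finset (ZMod (2^(j+k))) := (range (2^k)).image (fun t => ((2^j * t : ℕ) : ZMod (2^(j+k))))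

/-- special rotation class of T -/
def Tsp : Finset (ZMod (2^(j+k))) :=
  (range (2^k)).image (fun t => ((2^(j-1) + 2^j * t : ℕ) : ZMod (2^(j+k))))

/-- shared symmetric padding -/
def Vf (s : ℕ) : Finset ℕ :=
  (Icc 1 (s/2)) ∪ (Icc (2^k - s/2) (2^k - 1)) ∪ (if s % 2 = 1 then {2^(k-1)} else ∅)

def Wf (s : ℕ) : Finset (ZMod (2^(j+k))) :=
  (Vf k s).image (fun v => ((2^j * v : ℕ) : ZMod (2^(j+k))))

lemma natCast_injOn_lt (N : ℕ) [NeZero N] (a b : ℕ) (ha : a < N) (hb : b < N)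
    (hE : (a : ZMod N) = (b : ZMod N)) : a = b := by
  have h := congrArg ZMod.val hE
  rwa [ZMod.val_cast_of_lt ha, ZMod.val_cast_of_lt hb] at h

lemma mem_Kf {z : ZMod (2^(j+k))} : z ∈ Kf j k ↔ pi2 j k z = 0 := by
  constructor
  · intro hz
    obtain ⟨t, _, rfl⟩ := Finset.mem_image.mp hz
    rw [pi2_natCast, ZMod.natCast_eq_zero_iff]
    exact Dvd.intro t rfl
  · intro hz
    rw [pi2_apply, ZMod.natCast_eq_zero_iff] at hz
    obtain ⟨t, ht⟩ := hz
    have hv := z.val_lt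
    have hn := MK_eq_n j k
    refine Finset.mem_image.mpr ⟨t, Finset.mem_range.mpr ?_, ?_⟩
    · rw [ht] at hv
      by_contra hc
      push_neg at hc
      have : 2^j * 2^k ≤ 2^j * t := Nat.mul_le_mul_left _ hc
      omega
    · rw [← ht]
      simp [ZMod.natCast_val, ZMod.cast_id]

lemma mem_Tsp (hj : 1 ≤ j) {z : ZMod (2^(j+k))} : z ∈ Tsp j k ↔ pi2 j k z = Bm j := by
  constructor
  · intro hz
    obtain ⟨t, _, rfl⟩ := Finset.mem_image.mp hz
    rw [pi2_natCast, Bm, ZMod.natCast_eq_natCast_iff]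
    exact ((Nat.modEq_iff_dvd' (Nat.le_add_right _ _)).mpr ⟨t, by omega⟩).symm
  · intro hz
    rw [pi2_apply, Bm, ZMod.natCast_eq_natCast_iff] at hz
    have hzB : z.val % 2^j = 2^(j-1) := by
      have h2 := hz
      unfold Nat.ModEq at h2
      rwa [Nat.mod_eq_of_lt (pow_pred_lt j hj)] at h2
    have hv := z.val_lt
    have hn := MK_eq_n j k
    have hdm := Nat.div_add_mod z.val (2^j)
    refine Finset.mem_image.mpr ⟨z.val / 2^j, Finset.mem_range.mpr ?_, ?_⟩
    · by_contra hc
      push_neg at hc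
      have : 2^j * 2^k ≤ 2^j * (z.val / 2^j) := Nat.mul_le_mul_left _ hc
      omega
    · have : 2^(j-1) + 2^j * (z.val / 2^j) = z.val := by omega
      rw [this]
      simp [ZMod.natCast_val, ZMod.cast_id]

lemma card_Kf : (Kf j k).card = 2^k := by
  rw [Kf, Finset.card_image_of_injOn, Finset.card_range]
  intro a ha b hb hE
  simp only [Finset.coe_range, Set.mem_Iio] at ha hb
  have hn := MK_eq_n j k
  have := natCast_injOn_lt (2^(j+k)) (2^j*a) (2^j*b)
    (by have := Nat.mul_lt_mul_left (Nat.pow_pos (by norm_num) : 0 < 2^j) |>.mpr ha; omega)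
    (by have := Nat.mul_lt_mul_left (Nat.pow_pos (by norm_num) : 0 < 2^j) |>.mpr hb; omega)
    hE
  have hside : 0 < 2^j := Nat.pow_pos (by norm_num)
  exact Nat.eq_of_mul_eq_mul_left hside this

lemma card_Tsp (hj : 1 ≤ j) : (Tsp j k).card = 2^k := by
  rw [Tsp, Finset.card_image_of_injOn, Finset.card_range]
  intro a ha b hb hE
  simp only [Finset.coe_range, Set.mem_Iio] at ha hb
  have hn := MK_eq_n j k
  have hB := pow_pred_lt j hj
  have := natCast_injOn_lt (2^(j+k)) (2^(j-1) + 2^j*a) (2^(j-1) + 2^j*b)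
    (by have h1 : 2^j*(a+1) ≤ 2^j*2^k := Nat.mul_le_mul_left _ (by omega)
        have h2 : 2^j*(a+1) = 2^j*a + 2^j := by ring
        omega)
    (by have h1 : 2^j*(b+1) ≤ 2^j*2^k := Nat.mul_le_mul_left _ (by omega)
        have h2 : 2^j*(b+1) = 2^j*b + 2^j := by ring
        omega)
    hE
  have hside : 0 < 2^j := Nat.pow_pos (by norm_num)
  have : 2^j * a = 2^j * b := by omega
  exact Nat.eq_of_mul_eq_mul_left hside this

end Q2sets

section Q2sets2
open DihedralGroup Finset
variable (j k : ℕ)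

lemma two_pow_pred_k (hk : 1 ≤ k) : 2^(k-1) + 2^(k-1) = 2^k := by
  have h : k - 1 + 1 = k := by omega
  calc 2^(k-1) + 2^(k-1) = 2^(k-1+1) := by ring
  _ = 2^k := by rw [h]

lemma k_pos_of_odd {s : ℕ} (hs : s ≤ 2^k - 1) (hpar : s % 2 = 1) : 1 ≤ k := by
  by_contra hc
  push_neg at hc
  interval_cases k
  · simp at hs; omega

lemma mem_Vf_bounds {s v : ℕ} (hs : s ≤ 2^k - 1) (hv : v ∈ Vf k s) :
    1 ≤ v ∧ v ≤ 2^k - 1 := by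
  have hk2 : 1 ≤ 2^k := Nat.one_le_two_pow
  rw [Vf, Finset.mem_union, Finset.mem_union] at hv
  rcases hv with (hv | hv) | hv
  · rw [Finset.mem_Icc] at hv; omega
  · rw [Finset.mem_Icc] at hv; omega
  · by_cases hpar : s % 2 = 1
    · rw [if_pos hpar, Finset.mem_singleton] at hv
      have hk := k_pos_of_odd k hs hpar
      have h2 := two_pow_pred_k k hk
      have hp : 1 ≤ 2^(k-1) := Nat.one_le_two_pow
      omega
    · rw [if_neg hpar] at hv; simp at hv

lemma card_Vf {s : ℕ} (hs : s ≤ 2^k - 1) : (Vf k s).card = s := by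
  have hk2 : 1 ≤ 2^k := Nat.one_le_two_pow
  have hd1 : Disjoint (Icc 1 (s/2)) (Icc (2^k - s/2) (2^k - 1)) := by
    rw [Finset.disjoint_left]
    intro a ha hb
    rw [Finset.mem_Icc] at ha hb
    omega
  have hd2 : Disjoint ((Icc 1 (s/2)) ∪ (Icc (2^k - s/2) (2^k - 1)))
      (if s % 2 = 1 then ({2^(k-1)} : Finset ℕ) else ∅) := by
    by_cases hpar : s % 2 = 1
    · rw [if_pos hpar, Finset.disjoint_left]
      intro a ha hb
      rw [Finset.mem_singleton] at hb
      subst hb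
      have hk := k_pos_of_odd k hs hpar
      have h2 := two_pow_pred_k k hk
      rw [Finset.mem_union, Finset.mem_Icc, Finset.mem_Icc] at ha
      omega
    · rw [if_neg hpar]; exact Finset.disjoint_empty_right _
  rw [Vf, Finset.card_union_of_disjoint hd2, Finset.card_union_of_disjoint hd1,
    Nat.card_Icc, Nat.card_Icc]
  have hcif : (if s % 2 = 1 then ({2^(k-1)} : Finset ℕ) else ∅).card = s % 2 := by
    by_cases hpar : s % 2 = 1
    · rw [if_pos hpar, Finset.card_singleton]; omega
    · rw [if_neg hpar, Finset.card_empty]; omega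
  rw [hcif]
  omega

lemma sym_Vf {s v : ℕ} (hs : s ≤ 2^k - 1) (hv : v ∈ Vf k s) : 2^k - v ∈ Vf k s := by
  have hb := mem_Vf_bounds k hs hv
  rw [Vf, Finset.mem_union, Finset.mem_union] at hv ⊢
  rcases hv with (hv | hv) | hv
  · rw [Finset.mem_Icc] at hv
    left; right
    rw [Finset.mem_Icc]
    omega
  · rw [Finset.mem_Icc] at hv
    left; left
    rw [Finset.mem_Icc]
    omega
  · by_cases hpar : s % 2 = 1
    · rw [if_pos hpar, Finset.mem_singleton] at hv
      have hk := k_pos_of_odd k hs hpar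
      have h2 := two_pow_pred_k k hk
      right
      rw [if_pos hpar, Finset.mem_singleton]
      omega
    · rw [if_neg hpar] at hv; simp at hv

lemma mem_Wf_pi {s : ℕ} {z : ZMod (2^(j+k))} (hz : z ∈ Wf j k s) : pi2 j k z = 0 := by
  obtain ⟨v, _, rfl⟩ := Finset.mem_image.mp hz
  rw [pi2_natCast, ZMod.natCast_eq_zero_iff]
  exact Dvd.intro v rfl

lemma zero_not_mem_Wf {s : ℕ} (hs : s ≤ 2^k - 1) : (0 : ZMod (2^(j+k))) ∉ Wf j k s := by
  intro hz
  obtain ⟨v, hv, hE⟩ := Finset.mem_image.mp hz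
  have hb := mem_Vf_bounds k hs hv
  have hn := MK_eq_n j k
  have hMp : 0 < 2^j := Nat.pow_pos (by norm_num)
  have hlt : 2^j * v < 2^(j+k) := by
    have h1 : 2^j*(v+1) ≤ 2^j*2^k := Nat.mul_le_mul_left _ (by omega)
    have h2 : 2^j*(v+1) = 2^j*v + 2^j := by ring
    omega
  have := congrArg ZMod.val hE
  rw [ZMod.val_cast_of_lt hlt, ZMod.val_zero] at this
  have : 0 < 2^j * v := Nat.mul_pos hMp (by omega)
  omega

lemma neg_mem_Wf {s : ℕ} (hs : s ≤ 2^k - 1) {z : ZMod (2^(j+k))} (hz : z ∈ Wf j k s) :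
    -z ∈ Wf j k s := by
  obtain ⟨v, hv, rfl⟩ := Finset.mem_image.mp hz
  have hb := mem_Vf_bounds k hs hv
  refine Finset.mem_image.mpr ⟨2^k - v, sym_Vf k hs hv, ?_⟩
  have hsum : 2^j * (2^k - v) + 2^j * v = 2^j * 2^k := by
    rw [← Nat.mul_add]
    congr 1
    omega
  have : ((2^j * (2^k - v) : ℕ) : ZMod (2^(j+k))) + ((2^j * v : ℕ) : ZMod (2^(j+k))) = 0 := by
    rw [← Nat.cast_add, hsum, MK_eq_n, ZMod.natCast_self]
  linear_combination this

end Q2sets2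

section Q2iso
open DihedralGroup Finset
variable (j k : ℕ)

lemma card_Wf {s : ℕ} (hs : s ≤ 2^k - 1) : (Wf j k s).card = s := by
  rw [Wf, Finset.card_image_of_injOn, card_Vf k hs]
  intro a ha b hb hE
  have hba := mem_Vf_bounds k hs ha
  have hbb := mem_Vf_bounds k hs hb
  have hn := MK_eq_n j k
  have hMp : 0 < 2^j := Nat.pow_pos (by norm_num)
  have := natCast_injOn_lt (2^(j+k)) (2^j*a) (2^j*b)
    (by have h1 : 2^j*(a+1) ≤ 2^j*2^k := Nat.mul_le_mul_left _ (by omega)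
        have h2 : 2^j*(a+1) = 2^j*a + 2^j := by ring
        omega)
    (by have h1 : 2^j*(b+1) ≤ 2^j*2^k := Nat.mul_le_mul_left _ (by omega)
        have h2 : 2^j*(b+1) = 2^j*b + 2^j := by ring
        omega)
    hE
  exact Nat.eq_of_mul_eq_mul_left hMp this

/-- the "local" L predicate -/
def Lp (z : ZMod (2^(j+k))) : Prop := (pi2 j k z).val < 2^(j-1)

instance (z : ZMod (2^(j+k))) : Decidable (Lp j k z) := by
  unfold Lp; infer_instance

/-- the Bm shift as an element of ZMod n -/
def Bn : ZMod (2^(j+k)) := ((2^(j-1) : ℕ) : ZMod (2^(j+k)))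

lemma pi2_Bn : pi2 j k (Bn j k) = Bm j := by rw [Bn, pi2_natCast, Bm]

/-- the digraph isomorphism, an involution -/
def ff : DihedralGroup (2^(j+k)) → DihedralGroup (2^(j+k))
  | .r z => if Lp j k z then .r z else .sr (z - Bn j k)
  | .sr z => if Lp j k z then .r (z + Bn j k) else .sr z

lemma Lp_add_Bn (hj : 1 ≤ j) (z : ZMod (2^(j+k))) : Lp j k (z + Bn j k) ↔ ¬ Lp j k z := by
  unfold Lp
  rw [map_add, pi2_Bn]
  exact lt_add_Bm_iff j hj (pi2 j k z)

lemma Lp_sub_Bn (hj : 1 ≤ j) (z : ZMod (2^(j+k))) : Lp j k (z - Bn j k) ↔ ¬ Lp j k z := by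
  unfold Lp
  rw [map_sub, pi2_Bn]
  have hBB := Bm_add_Bm j hj
  have : pi2 j k z - Bm j = pi2 j k z + Bm j := by linear_combination -hBB
  rw [this]
  exact lt_add_Bm_iff j hj (pi2 j k z)

lemma ff_invol (hj : 1 ≤ j) (x : DihedralGroup (2^(j+k))) : ff j k (ff j k x) = x := by
  rcases x with z | z
  · by_cases hz : Lp j k z
    · simp only [ff, if_pos hz]
    · simp only [ff, if_neg hz]
      rw [if_pos ((Lp_sub_Bn j k hj z).mpr hz)]
      congr 1
      ring
  · by_cases hz : Lp j k z
    · simp only [ff, if_pos hz]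
      rw [if_neg (by rw [Lp_add_Bn j k hj z]; simpa using hz)]
      congr 1
      ring
    · simp only [ff, if_neg hz, if_neg hz]

/-- as an Equiv -/
def ffE (hj : 1 ≤ j) : Equiv.Perm (DihedralGroup (2^(j+k))) :=
  ⟨ff j k, ff j k, ff_invol j k hj, ff_invol j k hj⟩

end Q2iso

section Q2main
open DihedralGroup Finset
variable (j k : ℕ)

def S2 (s : ℕ) : Set (DihedralGroup (2^(j+k))) := dset (Wf j k s) (Kf j k)
def T2 (s : ℕ) : Set (DihedralGroup (2^(j+k))) := dset (Tsp j k ∪ Wf j k s) ∅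

lemma mem_S2_r {s : ℕ} {z : ZMod (2^(j+k))} : DihedralGroup.r z ∈ S2 j k s ↔ z ∈ Wf j k s :=
  mem_dset_r
lemma mem_S2_sr {s : ℕ} {z : ZMod (2^(j+k))} : DihedralGroup.sr z ∈ S2 j k s ↔ pi2 j k z = 0 := by
  rw [S2, mem_dset_sr, mem_Kf]
lemma mem_T2_r {s : ℕ} (hj : 1 ≤ j) {z : ZMod (2^(j+k))} :
    DihedralGroup.r z ∈ T2 j k s ↔ pi2 j k z = Bm j ∨ z ∈ Wf j k s := by
  rw [T2, mem_dset_r, Finset.mem_union, mem_Tsp j k hj]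
lemma mem_T2_sr {s : ℕ} {z : ZMod (2^(j+k))} : DihedralGroup.sr z ∈ T2 j k s ↔ False := by
  rw [T2, mem_dset_sr]
  simp

-- arithmetic helpers
lemma A1 {a b : ZMod (2^(j+k))} (hj : 1 ≤ j) (ha : Lp j k a) (hb : Lp j k b) :
    pi2 j k (b - a) ≠ Bm j := by
  rw [map_sub]
  exact diff_ne_Bm_small j hj ha hb
lemma A2 {a b : ZMod (2^(j+k))} (ha : Lp j k a) (hb : ¬ Lp j k b) :
    pi2 j k (b - a) ≠ 0 := by
  intro hE
  rw [map_sub, sub_eq_zero] at hE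
  rw [Lp, hE] at hb
  exact hb ha
lemma A2' {a b : ZMod (2^(j+k))} (ha : Lp j k a) (hb : ¬ Lp j k b) :
    pi2 j k (a - b) ≠ 0 := by
  intro hE
  rw [map_sub, sub_eq_zero] at hE
  rw [Lp, ← hE] at hb
  exact hb ha
lemma A3 {a b : ZMod (2^(j+k))} (hj : 1 ≤ j) (ha : ¬ Lp j k a) (hb : ¬ Lp j k b) :
    pi2 j k (a - b) ≠ Bm j := by
  rw [map_sub]
  exact diff_ne_Bm_large j hj (by rw [Lp] at ha; omega) (by rw [Lp] at hb; omega)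

lemma W1 {s : ℕ} (hs : s ≤ 2^k - 1) {a b : ZMod (2^(j+k))} :
    a - b ∈ Wf j k s ↔ b - a ∈ Wf j k s := by
  constructor
  · intro hmem
    have := neg_mem_Wf j k hs hmem
    rwa [neg_sub] at this
  · intro hmem
    have := neg_mem_Wf j k hs hmem
    rwa [neg_sub] at this

lemma notW_of_pi_ne {s : ℕ} {z : ZMod (2^(j+k))} (hz : pi2 j k z ≠ 0) : z ∉ Wf j k s :=
  fun hmem => hz (mem_Wf_pi j k hmem)

-- Bm facts as elements of ZMod n side
lemma pi_shift (a b : ZMod (2^(j+k))) : pi2 j k (b + Bn j k - a) = pi2 j k (b - a) + Bm j := by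
  simp only [map_sub, map_add, pi2_Bn]; ring

lemma Bm_cancel (hj : 1 ≤ j) (w : ZMod (2^j)) : w + Bm j = Bm j ↔ w = 0 := by
  constructor
  · intro hE; have := Bm_add_Bm j hj; linear_combination hE
  · intro hE; rw [hE, zero_add]

lemma Bm_cancel' (hj : 1 ≤ j) (w : ZMod (2^j)) : w - Bm j = Bm j ↔ w = 0 := by
  constructor
  · intro hE; have := Bm_add_Bm j hj; linear_combination hE + this
  · intro hE; rw [hE]; have := Bm_add_Bm j hj; linear_combination -this

/-- the main relational iff -/
lemma rel_iff_q2 {s : ℕ} (hj : 1 ≤ j) (hs : s ≤ 2^k - 1)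
    (x y : DihedralGroup (2^(j+k))) :
    cayRel (T2 j k s) (ff j k x) (ff j k y) ↔ cayRel (S2 j k s) x y := by
  have hBB := Bm_add_Bm j hj
  rcases x with a | a <;> rcases y with b | b
  · -- x = r a, y = r b
    by_cases ha : Lp j k a <;> by_cases hb : Lp j k b <;>
      simp only [ff, if_pos, if_neg, ha, hb, ite_true, ite_false]
    · rw [cayRel_rr, cayRel_rr, mem_S2_r, mem_T2_r j k hj]
      constructor
      · rintro (hc | hc)
        · exact absurd hc (A1 j k hj ha hb)
        · exact hc
      · exact Or.inr
    · rw [cayRel_rs, cayRel_rr, mem_S2_r, mem_T2_sr]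
      constructor
      · exact False.elim
      · intro hc
        exact (A2 j k ha hb) (mem_Wf_pi j k hc)
    · rw [cayRel_sr, cayRel_rr, mem_S2_r, mem_T2_sr]
      constructor
      · exact False.elim
      · intro hc
        exact (A2' j k hb ha) (mem_Wf_pi j k hc)
    · rw [cayRel_ss, cayRel_rr, mem_S2_r, mem_T2_r j k hj]
      have hE : (a - Bn j k) - (b - Bn j k) = a - b := by ring
      rw [hE]
      constructor
      · rintro (hc | hc)
        · exact absurd hc (A3 j k hj ha hb)
        · exact (W1 j k hs).mp hc
      · intro hc
        exact Or.inr ((W1 j k hs).mpr hc)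
  · -- x = r a, y = sr b : LHS-membership is sr(b-a) ∈ S2 ↔ pi(b-a) = 0
    by_cases ha : Lp j k a <;> by_cases hb : Lp j k b <;>
      simp only [ff, if_pos, if_neg, ha, hb, ite_true, ite_false]
    · rw [cayRel_rr, cayRel_rs, mem_S2_sr, mem_T2_r j k hj]
      rw [pi_shift]
      constructor
      · rintro (hc | hc)
        · exact (Bm_cancel j hj _).mp hc
        · exfalso
          have h0 := mem_Wf_pi j k hc
          rw [pi_shift] at h0
          have : pi2 j k (b - a) = Bm j := by linear_combination h0 - hBB
          exact (A1 j k hj ha hb) this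
      · intro hc
        exact Or.inl ((Bm_cancel j hj _).mpr hc)
    · rw [cayRel_rs, cayRel_rs, mem_S2_sr, mem_T2_sr]
      constructor
      · exact False.elim
      · intro hc
        exact (A2 j k ha hb) hc
    · rw [cayRel_sr, cayRel_rs, mem_S2_sr, mem_T2_sr]
      constructor
      · exact False.elim
      · intro hc
        rw [map_sub, sub_eq_zero] at hc
        rw [Lp, hc] at hb
        exact ha hb
    · rw [cayRel_ss, cayRel_rs, mem_S2_sr, mem_T2_r j k hj]
      have hE : (a - Bn j k) - b = (a - b) - Bn j k := by ring
      rw [hE, map_sub, pi2_Bn]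
      constructor
      · rintro (hc | hc)
        · rw [Bm_cancel' j hj] at hc
          rw [map_sub, sub_eq_zero] at hc ⊢
          exact hc.symm
        · exfalso
          have h0 := mem_Wf_pi j k hc
          rw [map_sub, pi2_Bn, sub_eq_zero] at h0
          have : pi2 j k (a - b) = Bm j := h0
          exact (A3 j k hj ha hb) this
      · intro hc
        left
        rw [map_sub, sub_eq_zero] at hc
        rw [Bm_cancel' j hj, map_sub, sub_eq_zero]
        exact hc.symm
  · -- x = sr a, y = r b : LHS sr(a-b) ∈ S2 ↔ pi(a-b) = 0
    by_cases ha : Lp j k a <;> by_cases hb : Lp j k b <;>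
      simp only [ff, if_pos, if_neg, ha, hb, ite_true, ite_false]
    · rw [cayRel_rr, cayRel_sr, mem_S2_sr, mem_T2_r j k hj]
      have hE : b - (a + Bn j k) = (b - a) - Bn j k := by ring
      rw [hE, map_sub, pi2_Bn]
      constructor
      · rintro (hc | hc)
        · rw [Bm_cancel' j hj] at hc
          rw [map_sub, sub_eq_zero] at hc ⊢
          exact hc.symm
        · exfalso
          have h0 := mem_Wf_pi j k hc
          rw [map_sub, pi2_Bn, sub_eq_zero] at h0
          exact (A1 j k hj ha hb) h0
      · intro hc
        left
        rw [map_sub, sub_eq_zero] at hc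
        rw [Bm_cancel' j hj, map_sub, sub_eq_zero]
        exact hc.symm
    · rw [cayRel_rs, cayRel_sr, mem_S2_sr, mem_T2_sr]
      constructor
      · exact False.elim
      · intro hc
        rw [map_sub, sub_eq_zero] at hc
        rw [Lp, ← hc] at hb
        exact hb ha
    · rw [cayRel_sr, cayRel_sr, mem_S2_sr, mem_T2_sr]
      constructor
      · exact False.elim
      · intro hc
        exact (A2 j k hb ha) hc
    · rw [cayRel_ss, cayRel_sr, mem_S2_sr, mem_T2_r j k hj]
      have hE : a - (b - Bn j k) = (a - b) + Bn j k := by ring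
      rw [hE, map_add, pi2_Bn]
      constructor
      · rintro (hc | hc)
        · rw [Bm_cancel j hj] at hc
          exact hc
        · exfalso
          have h0 := mem_Wf_pi j k hc
          rw [map_add, pi2_Bn] at h0
          have : pi2 j k (a - b) = Bm j := by linear_combination h0 - hBB
          exact (A3 j k hj ha hb) this
      · intro hc
        exact Or.inl ((Bm_cancel j hj _).mpr hc)
  · -- x = sr a, y = sr b : LHS r(a-b) ∈ S2 ↔ (a-b) ∈ Wf
    by_cases ha : Lp j k a <;> by_cases hb : Lp j k b <;>
      simp only [ff, if_pos, if_neg, ha, hb, ite_true, ite_false]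
    · rw [cayRel_rr, cayRel_ss, mem_S2_r, mem_T2_r j k hj]
      have hE : (b + Bn j k) - (a + Bn j k) = b - a := by ring
      rw [hE]
      constructor
      · rintro (hc | hc)
        · exact absurd hc (A1 j k hj ha hb)
        · exact (W1 j k hs).mp hc
      · intro hc
        exact Or.inr ((W1 j k hs).mpr hc)
    · rw [cayRel_rs, cayRel_ss, mem_S2_r, mem_T2_sr]
      constructor
      · exact False.elim
      · intro hc
        exact (A2' j k ha hb) (mem_Wf_pi j k hc)
    · rw [cayRel_sr, cayRel_ss, mem_S2_r, mem_T2_sr]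
      constructor
      · exact False.elim
      · intro hc
        exact (A2 j k hb ha) (mem_Wf_pi j k hc)
    · rw [cayRel_ss, cayRel_ss, mem_S2_r, mem_T2_r j k hj]
      constructor
      · rintro (hc | hc)
        · exact absurd hc (A3 j k hj ha hb)
        · exact hc
      · exact Or.inr

end Q2main

section Q2final
open DihedralGroup Finset

lemma two_y_eq (j k : ℕ) (hjk : 1 ≤ j + k) (y : ZMod (2^(j+k))) (hy : y + y = 0) :
    y = 0 ∨ y = ((2^(j+k-1) : ℕ) : ZMod (2^(j+k))) := by
  have hval := congrArg ZMod.val hy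
  rw [ZMod.val_add, ZMod.val_zero] at hval
  have hlt := y.val_lt
  have hpow : 2^(j+k-1) + 2^(j+k-1) = 2^(j+k) := by
    have h : j + k - 1 + 1 = j + k := by omega
    calc 2^(j+k-1) + 2^(j+k-1) = 2^(j+k-1+1) := by ring
    _ = 2^(j+k) := by rw [h]
  have h2 : y.val = 0 ∨ y.val = 2^(j+k-1) := by
    rcases Nat.lt_or_ge (y.val + y.val) (2^(j+k)) with hc | hc
    · left; rw [Nat.mod_eq_of_lt hc] at hval; omega
    · right
      rw [Nat.mod_eq_sub_mod hc, Nat.mod_eq_of_lt (by omega)] at hval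
      omega
  rcases h2 with h2 | h2
  · left
    have : ((y.val : ℕ) : ZMod (2^(j+k))) = y := by simp [ZMod.natCast_val, ZMod.cast_id]
    rw [← this, h2, Nat.cast_zero]
  · right
    have : ((y.val : ℕ) : ZMod (2^(j+k))) = y := by simp [ZMod.natCast_val, ZMod.cast_id]
    rw [← this, h2]

lemma caseA (r m : ℕ) (hr : 2 ≤ r) (hm1 : 1 ≤ m) (hm2 : m ≤ 2^r - 1)
    (h : HasDCI (DihedralGroup (2^r)) m) : False := by
  -- extract k, j, s
  set k := Nat.log 2 m with hk
  have hk1 : 2^k ≤ m := Nat.pow_log_le_self 2 (by omega)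
  have hk2 : m < 2^(k+1) := Nat.lt_pow_succ_log_self one_lt_two m
  have hkr : k < r := by
    have h1 : 2^k < 2^r := by
      have : 0 < 2^r := Nat.pow_pos (by norm_num)
      omega
    exact (Nat.pow_lt_pow_iff_right (by norm_num)).mp h1
  obtain ⟨j, hj1, hjk⟩ : ∃ j, 1 ≤ j ∧ r = j + k := ⟨r - k, by omega, by omega⟩
  subst hjk
  set s := m - 2^k with hs_def
  have hs : s ≤ 2^k - 1 := by
    have hpow : 2^(k+1) = 2^k + 2^k := by ring
    omega
  have hm_eq : 2^k + s = m := by omega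
  -- apply the DCI hypothesis
  have hS1 : (1 : DihedralGroup (2^(j+k))) ∉ S2 j k s := by
    apply one_notin_dset
    exact zero_not_mem_Wf j k hs
  have hScard : (S2 j k s).ncard = m := by
    rw [S2, ncard_dset, card_Wf j k hs, card_Kf]
    omega
  have hT1 : (1 : DihedralGroup (2^(j+k))) ∉ T2 j k s := by
    apply one_notin_dset
    rw [Finset.mem_union]
    rintro (hc | hc)
    · rw [mem_Tsp j k hj1] at hc
      rw [map_zero] at hc
      exact (Bm_ne_zero j hj1) hc.symm
    · exact zero_not_mem_Wf j k hs hc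
  have hiso : Nonempty (cayRel (S2 j k s) ≃r cayRel (T2 j k s)) :=
    ⟨{ toEquiv := ffE j k hj1, map_rel_iff' := @fun x y => rel_iff_q2 j k hj1 hs x y }⟩
  obtain ⟨α, hα⟩ := h (S2 j k s) hS1 hScard (T2 j k s) hT1 hiso
  -- contradiction
  have hsr0 : DihedralGroup.sr 0 ∈ S2 j k s := by
    rw [mem_S2_sr, map_zero]
  have hα0 : α (DihedralGroup.sr 0) ∈ T2 j k s := by
    rw [← hα]
    exact Set.mem_image_of_mem _ hsr0
  rcases hy : α (DihedralGroup.sr 0) with y | y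
  swap
  · rw [hy, mem_T2_sr] at hα0
    exact hα0
  rw [hy, mem_T2_r j k hj1] at hα0
  -- y + y = 0
  have hsq : DihedralGroup.r y * DihedralGroup.r y = 1 := by
    rw [← hy, ← map_mul]
    have : DihedralGroup.sr (0 : ZMod (2^(j+k))) * DihedralGroup.sr 0 = 1 := by
      rw [sr_mul_sr, sub_self, one_def]
    rw [this, map_one]
  rw [r_mul_r, one_def] at hsq
  have hyy : y + y = 0 := by injection hsq
  have hy0 : y ≠ 0 := by
    intro hc
    rw [hc] at hα0
    rcases hα0 with hc2 | hc2
    · rw [map_zero] at hc2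
      exact (Bm_ne_zero j hj1) hc2.symm
    · exact zero_not_mem_Wf j k hs hc2
  have hyval : y = ((2^(j+k-1) : ℕ) : ZMod (2^(j+k))) :=
    (two_y_eq j k (by omega) y hyy).resolve_left hy0
  -- build square root of sr 0
  have hpow2 : 2^(j+k-2) + 2^(j+k-2) = 2^(j+k-1) := by
    have h : j + k - 2 + 1 = j + k - 1 := by omega
    calc 2^(j+k-2) + 2^(j+k-2) = 2^(j+k-2+1) := by ring
    _ = 2^(j+k-1) := by rw [h]
  have hgg : α.symm (DihedralGroup.r ((2^(j+k-2) : ℕ) : ZMod (2^(j+k)))) *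
      α.symm (DihedralGroup.r ((2^(j+k-2) : ℕ) : ZMod (2^(j+k)))) = DihedralGroup.sr 0 := by
    rw [← map_mul, r_mul_r, ← Nat.cast_add, hpow2, ← hyval, ← hy]
    exact α.symm_apply_apply _
  exact no_sq_sr _ _ hgg

end Q2final

section Qodd
open DihedralGroup Finset
variable (q h : ℕ)

-- we work in ZMod (h*q), thinking n = h*q, with q ∣ h (so h*h ≡ 0 mod n)

def piH (hh0 : h ≠ 0) : ZMod (h*q) →+* ZMod h :=
  ZMod.castHom (Dvd.intro q rfl) _

lemma piH_apply (hh0 : h ≠ 0) (hq0 : q ≠ 0) (z : ZMod (h*q)) :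
    piH q h hh0 z = ((z.val : ℕ) : ZMod h) := by
  haveI : NeZero (h*q) := ⟨by positivity⟩
  conv_lhs => rw [show z = ((z.val : ℕ) : ZMod (h*q)) by simp [ZMod.natCast_val, ZMod.cast_id]]
  simp [piH]

lemma piH_natCast (hh0 : h ≠ 0) (x : ℕ) :
    piH q h hh0 ((x : ℕ) : ZMod (h*q)) = (x : ZMod h) := by
  simp [piH]

def oneH : Finset (ZMod (h*q)) := (range q).image (fun t => ((1 + h*t : ℕ) : ZMod (h*q)))

def hSet (E : Finset ℕ) : Finset (ZMod (h*q)) := E.image (fun x => ((h*x : ℕ) : ZMod (h*q)))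

def hcSet (c : ℕ) (E : Finset ℕ) : Finset (ZMod (h*q)) :=
  E.image (fun x => ((h*((c*x) % q) : ℕ) : ZMod (h*q)))

def BH (nb : ℕ) : Finset (ZMod (h*q)) :=
  ((Icc 2 (nb+1)) ×ˢ range q).image (fun p => ((p.1 + h*p.2 : ℕ) : ZMod (h*q)))

lemma mem_oneH (hh2 : 2 ≤ h) (hq0 : q ≠ 0) {z : ZMod (h*q)} :
    z ∈ oneH q h ↔ piH q h (by omega) z = 1 := by
  haveI : NeZero (h*q) := ⟨by positivity⟩
  constructor
  · intro hz
    obtain ⟨t, _, rfl⟩ := Finset.mem_image.mp hz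
    rw [piH_natCast]
    have : ((1 + h*t : ℕ) : ZMod h) = ((1 : ℕ) : ZMod h) := by
      rw [ZMod.natCast_eq_natCast_iff]
      exact ((Nat.modEq_iff_dvd' (by omega)).mpr ⟨t, by omega⟩).symm
    rw [this, Nat.cast_one]
  · intro hz
    rw [piH_apply q h (by omega) hq0] at hz
    have hmod : z.val % h = 1 := by
      have h2 : z.val ≡ 1 [MOD h] := by
        rw [← ZMod.natCast_eq_natCast_iff, hz, Nat.cast_one]
      have h3 : z.val % h = 1 % h := h2
      rwa [Nat.mod_eq_of_lt (show (1:ℕ) < h by omega)] at h3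
    have hv := z.val_lt
    have hdm := Nat.div_add_mod z.val h
    refine Finset.mem_image.mpr ⟨z.val / h, Finset.mem_range.mpr ?_, ?_⟩
    · by_contra hc
      push_neg at hc
      have : h * q ≤ h * (z.val / h) := Nat.mul_le_mul_left _ hc
      omega
    · have : 1 + h * (z.val / h) = z.val := by omega
      rw [this]
      simp [ZMod.natCast_val, ZMod.cast_id]

lemma mem_BH (hh2 : 2 ≤ h) (hq0 : q ≠ 0) {nb : ℕ} (hnb : nb + 1 ≤ h - 1) {z : ZMod (h*q)} :
    z ∈ BH q h nb ↔ 2 ≤ (piH q h (by omega) z).val ∧ (piH q h (by omega) z).val ≤ nb + 1 := by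
  haveI : NeZero (h*q) := ⟨by positivity⟩
  haveI : NeZero h := ⟨by omega⟩
  constructor
  · intro hz
    obtain ⟨⟨b, t⟩, hm, rfl⟩ := Finset.mem_image.mp hz
    rw [Finset.mem_product, Finset.mem_Icc] at hm
    obtain ⟨⟨hb2, hbn⟩, _⟩ := hm
    rw [piH_natCast]
    have : ((b + h*t : ℕ) : ZMod h) = ((b : ℕ) : ZMod h) := by
      rw [ZMod.natCast_eq_natCast_iff]
      exact ((Nat.modEq_iff_dvd' (by omega)).mpr ⟨t, by omega⟩).symm
    rw [this, ZMod.val_natCast, Nat.mod_eq_of_lt (by omega)]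
    omega
  · rintro ⟨h2, hn⟩
    rw [piH_apply q h (by omega) hq0, ZMod.val_natCast] at h2 hn
    have hv := z.val_lt
    have hdm := Nat.div_add_mod z.val h
    have hmlt : z.val % h < h := Nat.mod_lt _ (by omega)
    refine Finset.mem_image.mpr ⟨(z.val % h, z.val / h), ?_, ?_⟩
    · rw [Finset.mem_product, Finset.mem_Icc, Finset.mem_range]
      refine ⟨⟨h2, hn⟩, ?_⟩
      by_contra hc
      push_neg at hc
      have : h * q ≤ h * (z.val / h) := Nat.mul_le_mul_left _ hc
      omega
    · have : z.val % h + h * (z.val / h) = z.val := by omega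
      rw [this]
      simp [ZMod.natCast_val, ZMod.cast_id]

lemma mem_hSet_pi (hh2 : 2 ≤ h) {E : Finset ℕ} {z : ZMod (h*q)}
    (hz : z ∈ hSet q h E) : piH q h (by omega) z = 0 := by
  obtain ⟨x, _, rfl⟩ := Finset.mem_image.mp hz
  rw [piH_natCast, ZMod.natCast_eq_zero_iff]
  exact Dvd.intro x rfl

lemma mem_hcSet_pi (hh2 : 2 ≤ h) {c : ℕ} {E : Finset ℕ} {z : ZMod (h*q)}
    (hz : z ∈ hcSet q h c E) : piH q h (by omega) z = 0 := by
  obtain ⟨x, _, rfl⟩ := Finset.mem_image.mp hz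
  rw [piH_natCast, ZMod.natCast_eq_zero_iff]
  exact Dvd.intro _ rfl

lemma c_mul_h_cast (hq0 : q ≠ 0) (c x : ℕ) :
    ((c : ℕ) : ZMod (h*q)) * ((h*x : ℕ) : ZMod (h*q)) = ((h*((c*x) % q) : ℕ) : ZMod (h*q)) := by
  rw [← Nat.cast_mul, ZMod.natCast_eq_natCast_iff]
  have h1 : c * x ≡ (c*x) % q [MOD q] := (Nat.mod_modEq (c*x) q).symm
  have h2 : h * (c * x) ≡ h * ((c*x) % q) [MOD h * q] := h1.mul_left' (c := h)
  calc c * (h * x) = h * (c * x) := by ring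
  _ ≡ h * ((c*x) % q) [MOD h*q] := h2

lemma hset_transfer (hh2 : 2 ≤ h) (hq0 : q ≠ 0) {c : ℕ} (hcu : IsUnit ((c : ℕ) : ZMod (h*q)))
    {E : Finset ℕ} {d : ZMod (h*q)} :
    d ∈ hSet q h E ↔ ((c : ℕ) : ZMod (h*q)) * d ∈ hcSet q h c E := by
  constructor
  · intro hd
    obtain ⟨x, hx, rfl⟩ := Finset.mem_image.mp hd
    rw [c_mul_h_cast q h hq0]
    exact Finset.mem_image.mpr ⟨x, hx, rfl⟩
  · intro hd
    obtain ⟨x, hx, hE⟩ := Finset.mem_image.mp hd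
    rw [← c_mul_h_cast q h hq0] at hE
    have := hcu.mul_left_cancel hE.symm
    rw [this]
    exact Finset.mem_image.mpr ⟨x, hx, rfl⟩

end Qodd

section Qodd2
open DihedralGroup Finset
variable (q h : ℕ)

/-- the map φ on indices; `c'` plays the role of `c - 1` -/
def phi (c' : ℕ) (z : ZMod (h*q)) : ZMod (h*q) :=
  z + ((h * (c' * (z.val / h)) : ℕ) : ZMod (h*q))

lemma piH_phi (hh2 : 2 ≤ h) (c' : ℕ) (z : ZMod (h*q)) :
    piH q h (by omega) (phi q h c' z) = piH q h (by omega) z := by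
  rw [phi, map_add, piH_natCast]
  have : ((h * (c' * (z.val / h)) : ℕ) : ZMod h) = 0 := by
    rw [ZMod.natCast_eq_zero_iff]
    exact Dvd.intro _ rfl
  rw [this, add_zero]

lemma phi_diff (hh2 : 2 ≤ h) (hq0 : q ≠ 0) (c' : ℕ) (x y : ZMod (h*q))
    (hxy : piH q h (by omega) (y - x) = 0) :
    phi q h c' y - phi q h c' x = ((c'+1 : ℕ) : ZMod (h*q)) * (y - x) := by
  haveI : NeZero (h*q) := ⟨by positivity⟩
  have hyx : (piH q h (by omega)) y = (piH q h (by omega)) x := by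
    rw [map_sub, sub_eq_zero] at hxy
    exact hxy
  have hval : y.val % h = x.val % h := by
    have h1 : ((y.val : ℕ) : ZMod h) = ((x.val : ℕ) : ZMod h) := by
      rw [← piH_apply q h (by omega) hq0, ← piH_apply q h (by omega) hq0, hyx]
    rw [ZMod.natCast_eq_natCast_iff] at h1
    exact h1
  set v := x.val % h with hv
  have hdx := Nat.div_add_mod x.val h
  have hdy := Nat.div_add_mod y.val h
  set wx := x.val / h with hwx
  set wy := y.val / h with hwy
  have hxx : x = ((v + h*wx : ℕ) : ZMod (h*q)) := by
    have : v + h*wx = x.val := by omega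
    rw [this]; simp [ZMod.natCast_val, ZMod.cast_id]
  have hyy : y = ((v + h*wy : ℕ) : ZMod (h*q)) := by
    have : v + h*wy = y.val := by omega
    rw [this]; simp [ZMod.natCast_val, ZMod.cast_id]
  have hphix : phi q h c' x = ((v + h*wx + h*(c'*wx) : ℕ) : ZMod (h*q)) := by
    rw [phi, ← hwx]
    conv_lhs => rw [hxx]
    push_cast
    ring
  have hphiy : phi q h c' y = ((v + h*wy + h*(c'*wy) : ℕ) : ZMod (h*q)) := by
    rw [phi, ← hwy]
    conv_lhs => rw [hyy]
    push_cast
    ring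
  rw [hphix, hphiy, hxx, hyy]
  push_cast
  ring

end Qodd2

section Qodd3
open DihedralGroup Finset
variable (q h : ℕ)

def RSf (c' : ℕ) (E : Finset ℕ) (sw : Bool) : Finset (ZMod (h*q)) :=
  oneH q h ∪ (if sw then hcSet q h (c'+1) E else hSet q h E)

def CSf (c' nb : ℕ) (F : Finset ℕ) (sw : Bool) : Finset (ZMod (h*q)) :=
  BH q h nb ∪ (if sw then hcSet q h (c'+1) F else hSet q h F)

def Sodd (c' nb : ℕ) (E F : Finset ℕ) (sw : Bool) : Set (DihedralGroup (h*q)) :=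
  dset (RSf q h c' E sw) (CSf q h c' nb F sw)

lemma one_ne_zero_zmod (hh2 : 2 ≤ h) : (1 : ZMod h) ≠ 0 := by
  haveI : NeZero h := ⟨by omega⟩
  haveI : Fact (1 < h) := ⟨by omega⟩
  exact one_ne_zero

lemma trans_R (hh2 : 2 ≤ h) (hq0 : q ≠ 0) {c' : ℕ}
    (hcu : IsUnit ((c'+1 : ℕ) : ZMod (h*q))) {E : Finset ℕ} (x y : ZMod (h*q)) :
    phi q h c' y - phi q h c' x ∈ RSf q h c' E true ↔ y - x ∈ RSf q h c' E false := by
  have hpi : piH q h (by omega) (phi q h c' y - phi q h c' x) = piH q h (by omega) (y - x) := by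
    rw [map_sub, map_sub, piH_phi q h hh2, piH_phi q h hh2]
  by_cases hz : piH q h (by omega) (y - x) = 0
  · have hdiff := phi_diff q h hh2 hq0 c' x y hz
    rw [RSf, RSf, if_pos rfl, if_neg (by simp), Finset.mem_union, Finset.mem_union]
    constructor
    · rintro (hc | hc)
      · exfalso
        rw [mem_oneH q h hh2 hq0, hpi, hz] at hc
        exact one_ne_zero_zmod h hh2 hc.symm
      · right
        rw [hdiff] at hc
        exact (hset_transfer q h hh2 hq0 hcu).mpr hc
    · rintro (hc | hc)
      · exfalso
        rw [mem_oneH q h hh2 hq0, hz] at hc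
        exact one_ne_zero_zmod h hh2 hc.symm
      · right
        rw [hdiff]
        exact (hset_transfer q h hh2 hq0 hcu).mp hc
  · rw [RSf, RSf, if_pos rfl, if_neg (by simp), Finset.mem_union, Finset.mem_union]
    constructor
    · rintro (hc | hc)
      · left
        rw [mem_oneH q h hh2 hq0] at hc ⊢
        rw [← hpi]
        exact hc
      · exfalso
        exact hz (by rw [← hpi]; exact mem_hcSet_pi q h hh2 hc)
    · rintro (hc | hc)
      · left
        rw [mem_oneH q h hh2 hq0] at hc ⊢
        rw [hpi]
        exact hc
      · exact absurd (mem_hSet_pi q h hh2 hc) hz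

end Qodd3

section Qodd4
open DihedralGroup Finset
variable (q h : ℕ)

lemma trans_C (hh2 : 2 ≤ h) (hq0 : q ≠ 0) {c' nb : ℕ} (hnb : nb + 1 ≤ h - 1)
    (hcu : IsUnit ((c'+1 : ℕ) : ZMod (h*q))) {F : Finset ℕ} (x y : ZMod (h*q)) :
    phi q h c' y - phi q h c' x ∈ CSf q h c' nb F true ↔ y - x ∈ CSf q h c' nb F false := by
  have hpi : piH q h (by omega) (phi q h c' y - phi q h c' x) = piH q h (by omega) (y - x) := by
    rw [map_sub, map_sub, piH_phi q h hh2, piH_phi q h hh2]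
  by_cases hz : piH q h (by omega) (y - x) = 0
  · have hdiff := phi_diff q h hh2 hq0 c' x y hz
    rw [CSf, CSf, if_pos rfl, if_neg (by simp), Finset.mem_union, Finset.mem_union]
    constructor
    · rintro (hc | hc)
      · exfalso
        rw [mem_BH q h hh2 hq0 hnb, hpi, hz] at hc
        simp at hc
      · right
        rw [hdiff] at hc
        exact (hset_transfer q h hh2 hq0 hcu).mpr hc
    · rintro (hc | hc)
      · exfalso
        rw [mem_BH q h hh2 hq0 hnb, hz] at hc
        simp at hc
      · right
        rw [hdiff]
        exact (hset_transfer q h hh2 hq0 hcu).mp hc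
  · rw [CSf, CSf, if_pos rfl, if_neg (by simp), Finset.mem_union, Finset.mem_union]
    constructor
    · rintro (hc | hc)
      · left
        rw [mem_BH q h hh2 hq0 hnb] at hc ⊢
        rw [← hpi]
        exact hc
      · exact absurd (by rw [← hpi]; exact mem_hcSet_pi q h hh2 hc) hz
    · rintro (hc | hc)
      · left
        rw [mem_BH q h hh2 hq0 hnb] at hc ⊢
        rw [hpi]
        exact hc
      · exact absurd (mem_hSet_pi q h hh2 hc) hz

/-- the digraph map for the odd case -/
def fodd (c' : ℕ) : DihedralGroup (h*q) → DihedralGroup (h*q)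
  | .r z => .r (phi q h c' z)
  | .sr z => .sr (phi q h c' z)

lemma phi_inj (hh2 : 2 ≤ h) (hq0 : q ≠ 0) {c' : ℕ}
    (hcu : IsUnit ((c'+1 : ℕ) : ZMod (h*q))) :
    Function.Injective (phi q h c') := by
  intro x y hE
  have hpi : piH q h (by omega) (y - x) = 0 := by
    rw [map_sub, ← piH_phi q h hh2 c' x, ← piH_phi q h hh2 c' y, hE, sub_self]
  have hdiff := phi_diff q h hh2 hq0 c' x y hpi
  rw [hE, sub_self] at hdiff
  have h0 : ((c'+1 : ℕ) : ZMod (h*q)) * (y - x) = ((c'+1 : ℕ) : ZMod (h*q)) * 0 := by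
    rw [mul_zero, ← hdiff]
  have h1 := hcu.mul_left_cancel h0
  rw [sub_eq_zero] at h1
  exact h1.symm

lemma fodd_inj (hh2 : 2 ≤ h) (hq0 : q ≠ 0) {c' : ℕ}
    (hcu : IsUnit ((c'+1 : ℕ) : ZMod (h*q))) :
    Function.Injective (fodd q h c') := by
  intro x y hE
  rcases x with a | a <;> rcases y with b | b <;> simp only [fodd] at hE <;>
    first
      | (injection hE with hE2; rw [phi_inj q h hh2 hq0 hcu hE2])
      | (exact absurd hE (by simp))

noncomputable def foddE (hh2 : 2 ≤ h) (hq0 : q ≠ 0) {c' : ℕ}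
    (hcu : IsUnit ((c'+1 : ℕ) : ZMod (h*q))) : Equiv.Perm (DihedralGroup (h*q)) :=
  haveI : NeZero (h*q) := ⟨by positivity⟩
  Equiv.ofBijective (fodd q h c')
    ((Finite.injective_iff_bijective).mp (fodd_inj q h hh2 hq0 hcu))

lemma rel_iff_odd (hh2 : 2 ≤ h) (hq0 : q ≠ 0) {c' nb : ℕ} (hnb : nb + 1 ≤ h - 1)
    (hcu : IsUnit ((c'+1 : ℕ) : ZMod (h*q))) (E F : Finset ℕ)
    (x y : DihedralGroup (h*q)) :
    cayRel (Sodd q h c' nb E F true) (fodd q h c' x) (fodd q h c' y) ↔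
      cayRel (Sodd q h c' nb E F false) x y := by
  rcases x with a | a <;> rcases y with b | b <;> simp only [fodd]
  · rw [cayRel_rr, cayRel_rr, Sodd, Sodd, mem_dset_r, mem_dset_r]
    exact trans_R q h hh2 hq0 hcu a b
  · rw [cayRel_rs, cayRel_rs, Sodd, Sodd, mem_dset_sr, mem_dset_sr]
    exact trans_C q h hh2 hq0 hnb hcu a b
  · rw [cayRel_sr, cayRel_sr, Sodd, Sodd, mem_dset_sr, mem_dset_sr]
    exact trans_C q h hh2 hq0 hnb hcu b a
  · rw [cayRel_ss, cayRel_ss, Sodd, Sodd, mem_dset_r, mem_dset_r]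
    exact trans_R q h hh2 hq0 hcu b a

end Qodd4

section Qodd5
open DihedralGroup Finset
variable (q h : ℕ)

lemma hmul_lt {h x q : ℕ} (hh : 0 < h) (hx : x < q) : h*x < h*q := by
  have h1 := Nat.mul_le_mul_left h (show x+1 ≤ q by omega)
  have h2 : h*(x+1) = h*x + h := by ring
  omega

lemma card_oneH (hh2 : 2 ≤ h) (hq0 : q ≠ 0) : (oneH q h).card = q := by
  haveI : NeZero (h*q) := ⟨by positivity⟩
  rw [oneH, Finset.card_image_of_injOn, Finset.card_range]
  intro a ha b hb hE
  simp only [Finset.coe_range, Set.mem_Iio] at ha hb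
  have h1 : 1 + h*(a+1) ≤ h*q + 1 := by
    have := Nat.mul_le_mul_left h (show a+1 ≤ q by omega)
    omega
  have h2 : h*(a+1) = h*a + h := by ring
  have h3 : 1 + h*(b+1) ≤ h*q + 1 := by
    have := Nat.mul_le_mul_left h (show b+1 ≤ q by omega)
    omega
  have h4 : h*(b+1) = h*b + h := by ring
  have := natCast_injOn_lt (h*q) (1+h*a) (1+h*b) (by omega) (by omega) hE
  have hha : h*a + h ≤ h * b + h → a ≤ b := by
    intro hc
    by_contra hcc
    push_neg at hcc
    have := Nat.mul_le_mul_left h (show b+1 ≤ a by omega)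
    have h5 : h*(b+1) = h*b + h := by ring
    omega
  have hhb : h*b + h ≤ h * a + h → b ≤ a := by
    intro hc
    by_contra hcc
    push_neg at hcc
    have := Nat.mul_le_mul_left h (show a+1 ≤ b by omega)
    have h5 : h*(a+1) = h*a + h := by ring
    omega
  omega

lemma card_hSet (hh2 : 2 ≤ h) (hq0 : q ≠ 0) {E : Finset ℕ} (hE : ∀ x ∈ E, x < q) :
    (hSet q h E).card = E.card := by
  haveI : NeZero (h*q) := ⟨by positivity⟩
  rw [hSet, Finset.card_image_of_injOn]
  intro a ha b hb hEq
  have hha := hE a ha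
  have hhb := hE b hb
  have h1 : h*a < h*q := hmul_lt (by omega) hha
  have h2 : h*b < h*q := hmul_lt (by omega) hhb
  have := natCast_injOn_lt (h*q) (h*a) (h*b) h1 h2 hEq
  exact Nat.eq_of_mul_eq_mul_left (by omega) this

lemma card_hcSet (hh2 : 2 ≤ h) (hq0 : q ≠ 0) {c : ℕ} (hcq : Nat.Coprime c q)
    {E : Finset ℕ} (hE : ∀ x ∈ E, x < q) :
    (hcSet q h c E).card = E.card := by
  haveI : NeZero (h*q) := ⟨by positivity⟩
  rw [hcSet, Finset.card_image_of_injOn]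
  intro a ha b hb hEq
  have h1 : h*((c*a) % q) < h*q := hmul_lt (by omega) (Nat.mod_lt _ (by omega))
  have h2 : h*((c*b) % q) < h*q := hmul_lt (by omega) (Nat.mod_lt _ (by omega))
  have h3 := natCast_injOn_lt (h*q) _ _ h1 h2 hEq
  have h4 : (c*a) % q = (c*b) % q := Nat.eq_of_mul_eq_mul_left (show 0 < h by omega) h3
  have h5 : c*a ≡ c*b [MOD q] := by
    unfold Nat.ModEq
    omega
  have h6 : a ≡ b [MOD q] := h5.cancel_left_of_coprime (by rw [Nat.gcd_comm]; exact hcq)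
  have h7 : a % q = b % q := h6
  have := hE a ha
  have := hE b hb
  rw [Nat.mod_eq_of_lt (by omega), Nat.mod_eq_of_lt (by omega)] at h7
  exact h7

lemma card_BH (hh2 : 2 ≤ h) (hq0 : q ≠ 0) {nb : ℕ} (hnb : nb + 1 ≤ h - 1) :
    (BH q h nb).card = nb * q := by
  haveI : NeZero (h*q) := ⟨by positivity⟩
  haveI : NeZero h := ⟨by omega⟩
  rw [BH, Finset.card_image_of_injOn]
  · rw [Finset.card_product, Nat.card_Icc, Finset.card_range,
      show nb + 1 + 1 - 2 = nb from by omega]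
  · rintro ⟨a, t⟩ ha ⟨b, u⟩ hb hEq
    simp only [Finset.coe_product, Set.mem_prod, Finset.mem_coe, Finset.mem_Icc,
      Finset.mem_range] at ha hb
    have h1 : a + h*t < h*q := by
      have := Nat.mul_le_mul_left h (show t+1 ≤ q by omega)
      have h2 : h*(t+1) = h*t + h := by ring
      omega
    have h2 : b + h*u < h*q := by
      have := Nat.mul_le_mul_left h (show u+1 ≤ q by omega)
      have h3 : h*(u+1) = h*u + h := by ring
      omega
    have h3 := natCast_injOn_lt (h*q) _ _ h1 h2 hEq
    -- reduce mod h
    have h4 : (a + h*t) % h = (b + h*u) % h := by rw [h3]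
    rw [Nat.add_mul_mod_self_left, Nat.add_mul_mod_self_left] at h4
    rw [Nat.mod_eq_of_lt (by omega), Nat.mod_eq_of_lt (by omega)] at h4
    have h5 : t = u := by
      have h6 : h*t = h*u := by omega
      exact Nat.eq_of_mul_eq_mul_left (by omega) h6
    simp [h4, h5]

lemma disj_oneH_h (hh2 : 2 ≤ h) (hq0 : q ≠ 0) {c' : ℕ} {E : Finset ℕ} (sw : Bool) :
    Disjoint (oneH q h) (if sw then hcSet q h (c'+1) E else hSet q h E) := by
  rw [Finset.disjoint_left]
  intro z hz1 hz2
  rw [mem_oneH q h hh2 hq0] at hz1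
  have : piH q h (by omega) z = 0 := by
    cases sw
    · exact mem_hSet_pi q h hh2 (by simpa using hz2)
    · exact mem_hcSet_pi q h hh2 (by simpa using hz2)
  rw [hz1] at this
  exact one_ne_zero_zmod h hh2 this

lemma disj_BH_h (hh2 : 2 ≤ h) (hq0 : q ≠ 0) {c' nb : ℕ} (hnb : nb + 1 ≤ h - 1)
    {F : Finset ℕ} (sw : Bool) :
    Disjoint (BH q h nb) (if sw then hcSet q h (c'+1) F else hSet q h F) := by
  rw [Finset.disjoint_left]
  intro z hz1 hz2
  rw [mem_BH q h hh2 hq0 hnb] at hz1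
  have : piH q h (by omega) z = 0 := by
    cases sw
    · exact mem_hSet_pi q h hh2 (by simpa using hz2)
    · exact mem_hcSet_pi q h hh2 (by simpa using hz2)
  rw [this] at hz1
  simp at hz1

lemma ncard_Sodd (hh2 : 2 ≤ h) (hq0 : q ≠ 0) {c' nb : ℕ} (hnb : nb + 1 ≤ h - 1)
    (hcq : Nat.Coprime (c'+1) q) {E F : Finset ℕ}
    (hE : ∀ x ∈ E, x < q) (hF : ∀ x ∈ F, x < q) (sw : Bool) :
    (Sodd q h c' nb E F sw).ncard = q + E.card + (nb * q + F.card) := by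
  rw [Sodd, ncard_dset, RSf, CSf, Finset.card_union_of_disjoint (disj_oneH_h q h hh2 hq0 sw),
    Finset.card_union_of_disjoint (disj_BH_h q h hh2 hq0 hnb sw),
    card_oneH q h hh2 hq0, card_BH q h hh2 hq0 hnb]
  cases sw
  · rw [if_neg (by simp), if_neg (by simp),
      card_hSet q h hh2 hq0 hE, card_hSet q h hh2 hq0 hF]
  · rw [if_pos rfl, if_pos rfl,
      card_hcSet q h hh2 hq0 hcq hE, card_hcSet q h hh2 hq0 hcq hF]

end Qodd5

section AlphaR
open DihedralGroup
variable {n : ℕ}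

lemma r_pow (i : ZMod n) (k : ℕ) : (DihedralGroup.r i)^k = DihedralGroup.r ((k : ZMod n) * i) := by
  induction k with
  | zero => simp [one_def, -r_zero]
  | succ k ih =>
    rw [pow_succ, ih, r_mul_r]
    push_cast
    ring_nf

lemma alpha_r [NeZero n] (hn3 : 3 ≤ n) (α : DihedralGroup n ≃* DihedralGroup n) :
    ∃ u : ZMod n, Nat.gcd n u.val = 1 ∧ ∀ x : ZMod n, α (DihedralGroup.r x) =
      DihedralGroup.r (u * x) := by
  have ho : orderOf (α (DihedralGroup.r (1 : ZMod n))) = n := by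
    have h1 := orderOf_injective α.toMonoidHom α.injective (DihedralGroup.r (1 : ZMod n))
    simpa [orderOf_r_one] using h1
  rcases hu : α (DihedralGroup.r (1 : ZMod n)) with u | u
  swap
  · rw [hu, orderOf_sr] at ho
    omega
  rw [hu, orderOf_r] at ho
  have hg : Nat.gcd n u.val = 1 := by
    rcases Nat.div_eq_self.mp ho with hc | hc
    · exfalso; have := NeZero.ne n; omega
    · exact hc
  refine ⟨u, hg, fun x => ?_⟩
  have hx : DihedralGroup.r x = (DihedralGroup.r (1 : ZMod n))^(x.val) := by
    rw [_root_.r_pow, mul_one, ZMod.natCast_val, ZMod.cast_id]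
  rw [hx, map_pow, hu, _root_.r_pow]
  congr 1
  rw [ZMod.natCast_val, ZMod.cast_id]
  ring

end AlphaR

section Qodd6
open DihedralGroup Finset
variable (q h : ℕ)

lemma val_mod_of_pi_one (hh2 : 2 ≤ h) (hq0 : q ≠ 0) {z : ZMod (h*q)}
    (hz : piH q h (by omega) z = 1) : z.val % h = 1 := by
  rw [piH_apply q h (by omega) hq0] at hz
  have h2 : z.val ≡ 1 [MOD h] := by
    rw [← ZMod.natCast_eq_natCast_iff, hz, Nat.cast_one]
  have h3 : z.val % h = 1 % h := h2
  rwa [Nat.mod_eq_of_lt (show (1:ℕ) < h by omega)] at h3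

lemma zero_not_mem_RSf (hh2 : 2 ≤ h) (hq0 : q ≠ 0) {c' : ℕ}
    (hcq : Nat.Coprime (c'+1) q) {E : Finset ℕ} (hE : ∀ x ∈ E, 1 ≤ x ∧ x < q) (sw : Bool) :
    (0 : ZMod (h*q)) ∉ RSf q h c' E sw := by
  haveI : NeZero (h*q) := ⟨by positivity⟩
  rw [RSf, Finset.mem_union]
  rintro (hc | hc)
  · rw [mem_oneH q h hh2 hq0, map_zero] at hc
    exact one_ne_zero_zmod h hh2 hc.symm
  · have hc2 : ∃ w : ℕ, w ≠ 0 ∧ w < q ∧ ((h*w : ℕ) : ZMod (h*q)) = 0 := by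
      cases sw
      · rw [if_neg (by simp)] at hc
        obtain ⟨x, hx, hx2⟩ := Finset.mem_image.mp hc
        exact ⟨x, by have := (hE x hx).1; omega, (hE x hx).2, hx2⟩
      · rw [if_pos rfl] at hc
        obtain ⟨x, hx, hx2⟩ := Finset.mem_image.mp hc
        refine ⟨((c'+1)*x) % q, ?_, Nat.mod_lt _ (by omega), hx2⟩
        intro hmod
        have hdvd : q ∣ (c'+1)*x := Nat.dvd_of_mod_eq_zero hmod
        have hdx : q ∣ x := (Nat.Coprime.dvd_of_dvd_mul_left
          (Nat.Coprime.symm hcq) hdvd)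
        have := (hE x hx).1
        have := (hE x hx).2
        have := Nat.le_of_dvd (by omega) hdx
        omega
    obtain ⟨w, hw0, hwq, hwc⟩ := hc2
    have hlt : h*w < h*q := hmul_lt (by omega) hwq
    have := congrArg ZMod.val hwc
    rw [ZMod.val_cast_of_lt hlt, ZMod.val_zero] at this
    have : 0 < h*w := Nat.mul_pos (by omega) (by omega)
    omega

lemma one_in_oneH (hh2 : 2 ≤ h) (hq0 : q ≠ 0) : (1 : ZMod (h*q)) ∈ oneH q h := by
  refine Finset.mem_image.mpr ⟨0, Finset.mem_range.mpr (by omega), ?_⟩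
  norm_num

lemma u_fix_h (hh2 : 2 ≤ h) (hq0 : q ≠ 0) (hqh : q ∣ h) {u : ZMod (h*q)}
    (hu : u.val % h = 1) (x : ℕ) :
    u * ((h*x : ℕ) : ZMod (h*q)) = ((h*x : ℕ) : ZMod (h*q)) := by
  haveI : NeZero (h*q) := ⟨by positivity⟩
  have hdm := Nat.div_add_mod u.val h
  set su := u.val / h with hsu
  have huu : u = ((1 + h*su : ℕ) : ZMod (h*q)) := by
    have : 1 + h*su = u.val := by omega
    rw [this]; simp [ZMod.natCast_val, ZMod.cast_id]
  have hhh : ((h*h : ℕ) : ZMod (h*q)) = 0 := by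
    rw [ZMod.natCast_eq_zero_iff]
    obtain ⟨d, rfl⟩ := hqh
    exact ⟨d, by ring⟩
  rw [huu]
  push_cast at hhh ⊢
  linear_combination (hhh) * (su * x)

end Qodd6

section Qodd7
open DihedralGroup Finset
variable (q h : ℕ)

lemma caseB_core (hq3 : 3 ≤ q) (hh2 : 2 ≤ h) (hqh : q ∣ h) (hqp : q.Prime)
    {e nb fl : ℕ} (he1 : 1 ≤ e) (he2 : e + 2 ≤ q) (hnb : nb + 1 ≤ h - 1) (hfl : fl ≤ q - 1)
    (hcopn : Nat.Coprime (e+1) (h*q))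
    (hdci : HasDCI (DihedralGroup (h*q)) (q + e + (nb*q + fl))) : False := by
  haveI : NeZero (h*q) := ⟨by positivity⟩
  have hq0 : q ≠ 0 := by omega
  have hcu : IsUnit ((e+1 : ℕ) : ZMod (h*q)) := (ZMod.isUnit_iff_coprime _ _).mpr hcopn
  have hcq : Nat.Coprime (e+1) q := Nat.Coprime.coprime_dvd_right (Dvd.intro_left h rfl) hcopn
  set E : Finset ℕ := Icc 1 e with hE_def
  set F : Finset ℕ := range fl with hF_def
  have hE : ∀ x ∈ E, 1 ≤ x ∧ x < q := by
    intro x hx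
    rw [hE_def, Finset.mem_Icc] at hx
    omega
  have hEq : ∀ x ∈ E, x < q := fun x hx => (hE x hx).2
  have hF : ∀ x ∈ F, x < q := by
    intro x hx
    rw [hF_def, Finset.mem_range] at hx
    omega
  -- apply DCI
  have h1S : (1 : DihedralGroup (h*q)) ∉ Sodd q h e nb E F false :=
    one_notin_dset (zero_not_mem_RSf q h hh2 hq0 hcq hE false)
  have h1T : (1 : DihedralGroup (h*q)) ∉ Sodd q h e nb E F true :=
    one_notin_dset (zero_not_mem_RSf q h hh2 hq0 hcq hE true)
  have hCard : (Sodd q h e nb E F false).ncard = q + e + (nb*q + fl) := by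
    rw [ncard_Sodd q h hh2 hq0 hnb hcq hEq hF false, hE_def, hF_def, Nat.card_Icc,
      Finset.card_range]
    omega
  have hiso : Nonempty (cayRel (Sodd q h e nb E F false) ≃r cayRel (Sodd q h e nb E F true)) :=
    ⟨{ toEquiv := foddE q h hh2 hq0 hcu,
       map_rel_iff' := @fun x y => rel_iff_odd q h hh2 hq0 hnb hcu E F x y }⟩
  obtain ⟨α, hα⟩ := hdci _ h1S hCard _ h1T hiso
  -- structure of α on rotations
  obtain ⟨u, hg, hur⟩ := alpha_r (show 3 ≤ h*q by nlinarith) α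
  -- u ∈ RSf true
  have hr1S : DihedralGroup.r (1 : ZMod (h*q)) ∈ Sodd q h e nb E F false := by
    rw [Sodd, mem_dset_r, RSf, Finset.mem_union]
    exact Or.inl (one_in_oneH q h hh2 hq0)
  have hruT : DihedralGroup.r u ∈ Sodd q h e nb E F true := by
    have := Set.mem_image_of_mem α hr1S
    rw [hα] at this
    have h2 := hur 1
    rw [mul_one] at h2
    rwa [h2] at this
  rw [Sodd, mem_dset_r, RSf, Finset.mem_union, if_pos rfl] at hruT
  -- u must be in oneH
  have hu1 : u.val % h = 1 := by
    rcases hruT with hc | hc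
    · exact val_mod_of_pi_one q h hh2 hq0 ((mem_oneH q h hh2 hq0).mp hc)
    · exfalso
      have hpi0 := mem_hcSet_pi q h hh2 hc
      rw [piH_apply q h (by omega) hq0, ZMod.natCast_eq_zero_iff] at hpi0
      have hqd : q ∣ u.val := dvd_trans hqh hpi0
      have hqn : q ∣ h*q := ⟨h, by ring⟩
      have := Nat.dvd_gcd hqn hqd
      rw [hg] at this
      have := Nat.le_of_dvd (by omega) this
      omega
  -- every x in E is (e+1)*x' mod q for some x' in E
  have hkey : ∀ x ∈ E, ∃ x' ∈ E, x = ((e+1)*x') % q := by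
    intro x hx
    have hxS : DihedralGroup.r ((h*x : ℕ) : ZMod (h*q)) ∈ Sodd q h e nb E F false := by
      rw [Sodd, mem_dset_r, RSf, Finset.mem_union, if_neg (by simp)]
      exact Or.inr (Finset.mem_image.mpr ⟨x, hx, rfl⟩)
    have hxT : DihedralGroup.r ((h*x : ℕ) : ZMod (h*q)) ∈ Sodd q h e nb E F true := by
      have := Set.mem_image_of_mem α hxS
      rw [hα] at this
      rw [hur, u_fix_h q h hh2 hq0 hqh hu1 x] at this
      exact this
    rw [Sodd, mem_dset_r, RSf, Finset.mem_union, if_pos rfl] at hxT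
    rcases hxT with hc | hc
    · exfalso
      have := (mem_oneH q h hh2 hq0).mp hc
      rw [piH_natCast] at this
      have h0 : ((h*x : ℕ) : ZMod h) = 0 := by
        rw [ZMod.natCast_eq_zero_iff]
        exact Dvd.intro x rfl
      rw [h0] at this
      exact one_ne_zero_zmod h hh2 this.symm
    · obtain ⟨x', hx', heq⟩ := Finset.mem_image.mp hc
      refine ⟨x', hx', ?_⟩
      have hlt1 : h*x < h*q := hmul_lt (by omega) (hEq x hx)
      have hlt2 : h*(((e+1)*x') % q) < h*q := hmul_lt (by omega) (Nat.mod_lt _ (by omega))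
      have := natCast_injOn_lt (h*q) _ _ hlt2 hlt1 heq
      exact (Nat.eq_of_mul_eq_mul_left (show 0 < h by omega) this).symm
  -- conclude E = image and contradiction
  have hsub : E ⊆ E.image (fun x' => ((e+1)*x') % q) := by
    intro x hx
    obtain ⟨x', hx', heq⟩ := hkey x hx
    exact Finset.mem_image.mpr ⟨x', hx', heq.symm⟩
  have hEE : E = E.image (fun x' => ((e+1)*x') % q) :=
    Finset.eq_of_subset_of_card_le hsub (Finset.card_image_le)
  have h1E : (1 : ℕ) ∈ E := by
    rw [hE_def, Finset.mem_Icc]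
    omega
  have : ((e+1)*1) % q ∈ E := by
    rw [hEE]
    exact Finset.mem_image.mpr ⟨1, h1E, rfl⟩
  rw [hE_def, Finset.mem_Icc, mul_one, Nat.mod_eq_of_lt (by omega)] at this
  omega

end Qodd7

lemma caseB (q r m : ℕ) (hqp : q.Prime) (hq3 : 3 ≤ q) (hr : 2 ≤ r)
    (hm1 : q + 1 ≤ m) (hm2 : m ≤ q^r - 1)
    (hdci : HasDCI (DihedralGroup (q^r)) m) : False := by
  set h := q^(r-1) with hh_def
  have hqr : q^r = h * q := by
    rw [hh_def, ← pow_succ]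
    congr 1
    omega
  rw [hqr] at hdci hm2
  have hh2 : 2 ≤ h := by
    have : q^1 ≤ q^(r-1) := Nat.pow_le_pow_right (by omega) (by omega)
    rw [pow_one] at this
    omega
  have hqh : q ∣ h := dvd_pow_self q (by omega)
  have hcop : ∀ e : ℕ, e + 2 ≤ q → Nat.Coprime (e+1) (h*q) := by
    intro e he
    have hcq : Nat.Coprime (e+1) q := by
      have hnd : ¬ q ∣ (e+1) := by
        intro hd
        have h1 : q ≤ e+1 := Nat.le_of_dvd (by omega) hd
        omega
      exact ((Nat.Prime.coprime_iff_not_dvd hqp).mpr hnd).symm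
    exact Nat.Coprime.mul_right (by rw [hh_def]; exact hcq.pow_right _) hcq
  -- decompose m
  obtain ⟨a, b, hab, hbq⟩ : ∃ a b, q * a + b = m - q ∧ b < q :=
    ⟨(m - q) / q, (m - q) % q, Nat.div_add_mod (m - q) q, Nat.mod_lt _ (by omega)⟩
  have hq_h : q*(h-1) + q = h*q := by
    have h1 : h - 1 + 1 = h := by omega
    calc q*(h-1) + q = q*((h-1)+1) := by ring
    _ = q*h := by rw [h1]
    _ = h*q := by ring
  have hlt : q*a < q*(h-1) := by omega
  have hah : a < h - 1 := Nat.lt_of_mul_lt_mul_left hlt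
  by_cases hb0 : b = 0
  · -- e = 1, nb = a - 1, fl = q - 1
    have ha1 : 1 ≤ a := by
      by_contra hc
      push_neg at hc
      interval_cases a
      · omega
    obtain ⟨a₀, rfl⟩ : ∃ a₀, a = a₀ + 1 := ⟨a - 1, by omega⟩
    have hmul : q * (a₀ + 1) = q * a₀ + q := by ring
    have hnb : a₀ + 1 ≤ h - 1 := by omega
    have hm_eq : m = q + 1 + (a₀ * q + (q - 1)) := by
      have : a₀ * q = q * a₀ := by ring
      omega
    rw [hm_eq] at hdci
    exact caseB_core q h hq3 hh2 hqh hqp (by omega) (by omega) hnb (by omega)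
      (hcop 1 (by omega)) hdci
  · by_cases hbq1 : b ≤ q - 2
    · -- e = b, nb = a, fl = 0
      have hnb : a + 1 ≤ h - 1 := by omega
      have hm_eq : m = q + b + (a * q + 0) := by
        have : a * q = q * a := by ring
        omega
      rw [hm_eq] at hdci
      exact caseB_core q h hq3 hh2 hqh hqp (by omega) (by omega) hnb (by omega)
        (hcop b (by omega)) hdci
    · -- b = q - 1 : e = 1, nb = a, fl = q - 2
      have hb : b = q - 1 := by omega
      have hnb : a + 1 ≤ h - 1 := by omega
      have hm_eq : m = q + 1 + (a * q + (q - 2)) := by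
        have : a * q = q * a := by ring
        omega
      rw [hm_eq] at hdci
      exact caseB_core q h hq3 hh2 hqh hqp (by omega) (by omega) hnb (by omega)
        (hcop 1 (by omega)) hdci


/-- For `n = q^r` with `q` prime and `r ≥ 2`, if `D_{2n}` has the
`m`-DCI property for some `1 ≤ m ≤ n - 1`, then `q` is odd and `m ≤ q`. -/
theorem stmt16 (q r m : ℕ) (hq : q.Prime) (hr : 2 ≤ r)
    (hm1 : 1 ≤ m) (hm2 : m ≤ q ^ r - 1)
    (h : HasDCI (DihedralGroup (q ^ r)) m) :
    Odd q ∧ m ≤ q := by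
  have hq2 : q ≠ 2 := by
    intro h2
    subst h2
    exact caseA r m hr hm1 hm2 h
  have hodd : Odd q := hq.odd_of_ne_two hq2
  refine ⟨hodd, ?_⟩
  by_contra hmq
  push_neg at hmq
  have hq3 : 3 ≤ q := by
    have := hq.two_le
    omega
  exact caseB q r m hq hq3 hr (by omega) hm2 h
end

section
/- If the dihedral group D_{2n} (n ≥ 2) is a DCI-group, then n = 2 or n is odd and square-free. -/
set_option linter.unusedSectionVars false
set_option linter.unnecessarySimpa false

namespace S17
open DihedralGroup
open DihedralGroup

@[simp] lemma inv_r {n : ℕ} (i : ZMod n) : (r i)⁻¹ = r (-i) := rfl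
@[simp] lemma inv_sr {n : ℕ} (i : ZMod n) : (sr i)⁻¹ = sr i := rfl

/-! ### Even case -/

def phiE {n : ℕ} : DihedralGroup n → ZMod 2
  | .r _ => 0
  | .sr _ => 1

def chiE {n : ℕ} (h2 : 2 ∣ n) : DihedralGroup n → ZMod 2
  | .r i => ZMod.castHom h2 (ZMod 2) i
  | .sr i => ZMod.castHom h2 (ZMod 2) i

def Se (n : ℕ) : Set (DihedralGroup n) := {x | x ≠ 1 ∧ phiE x = 0}
def Te (n : ℕ) (h2 : 2 ∣ n) : Set (DihedralGroup n) := {x | x ≠ 1 ∧ chiE h2 x = 0}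

lemma phiE_mul_inv {n : ℕ} (a b : DihedralGroup n) :
    phiE (b * a⁻¹) = phiE b - phiE a := by
  rcases a with i | i <;> rcases b with j | j <;>
    simp only [inv_r, inv_sr, r_mul_r, r_mul_sr, sr_mul_r, sr_mul_sr, phiE] <;> decide

lemma chiE_mul_inv {n : ℕ} (h2 : 2 ∣ n) (a b : DihedralGroup n) :
    chiE h2 (b * a⁻¹) = chiE h2 b - chiE h2 a := by
  have hneg : ∀ x y : ZMod 2, x - y = y - x := by decide
  rcases a with i | i <;> rcases b with j | j <;>
    simp only [inv_r, inv_sr, r_mul_r, r_mul_sr, sr_mul_r, sr_mul_sr, chiE,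
      ← sub_eq_add_neg, map_sub] <;> rw [hneg]

lemma mem_Se_iff {n : ℕ} (a b : DihedralGroup n) :
    b * a⁻¹ ∈ Se n ↔ b ≠ a ∧ phiE b = phiE a := by
  rw [Se, Set.mem_setOf_eq, phiE_mul_inv, ne_eq, mul_inv_eq_one, sub_eq_zero, ne_eq]

lemma mem_Te_iff {n : ℕ} (h2 : 2 ∣ n) (a b : DihedralGroup n) :
    b * a⁻¹ ∈ Te n h2 ↔ b ≠ a ∧ chiE h2 b = chiE h2 a := by
  rw [Te, Set.mem_setOf_eq, chiE_mul_inv, ne_eq, mul_inv_eq_one, sub_eq_zero, ne_eq]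
variable {n : ℕ}

def evF : DihedralGroup n → DihedralGroup n
  | .r i => if Even i.val then .r i else .sr (i + 1)
  | .sr i => if Even i.val then .sr (i + 1) else .r i

def evG : DihedralGroup n → DihedralGroup n
  | .r i => if Even i.val then .r i else .sr i
  | .sr i => if Even i.val then .r (i - 1) else .sr (i - 1)

lemma parity_succ (h2 : 2 ∣ n) (hn : 2 ≤ n) (i : ZMod n) :
    Even ((i + 1).val) ↔ ¬ Even i.val := by
  have : NeZero n := ⟨by omega⟩
  have : Fact (1 < n) := ⟨by omega⟩
  rw [ZMod.val_add, ZMod.val_one, Nat.even_iff, Nat.even_iff, Nat.mod_mod_of_dvd _ h2]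
  omega

lemma parity_pred (h2 : 2 ∣ n) (hn : 2 ≤ n) (i : ZMod n) :
    Even ((i - 1).val) ↔ ¬ Even i.val := by
  have := parity_succ h2 hn (i - 1)
  rw [sub_add_cancel] at this
  tauto

def evFE (h2 : 2 ∣ n) (hn : 2 ≤ n) : Equiv.Perm (DihedralGroup n) where
  toFun := evF
  invFun := evG
  left_inv := by
    rintro (i | i) <;> unfold evF
    · by_cases hi : Even i.val
      · simp only [hi, if_true]; unfold evG; simp [hi]
      · simp only [hi, if_false]; unfold evG
        have h1 : Even ((i + 1).val) := (parity_succ h2 hn i).mpr hi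
        simp [h1, add_sub_cancel_right]
    · by_cases hi : Even i.val
      · simp only [hi, if_true]; unfold evG
        have h1 : ¬ Even ((i + 1).val) := fun he => (parity_succ h2 hn i).mp he hi
        simp [h1, add_sub_cancel_right]
      · simp only [hi, if_false]; unfold evG; simp [hi]
  right_inv := by
    rintro (i | i) <;> unfold evG
    · by_cases hi : Even i.val
      · simp only [hi, if_true]; unfold evF; simp [hi]
      · simp only [hi, if_false]; unfold evF; simp [hi]
    · by_cases hi : Even i.val
      · simp only [hi, if_true]; unfold evF
        have h1 : ¬ Even ((i - 1).val) := by rw [parity_pred h2 hn]; tauto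
        simp [h1, sub_add_cancel]
      · simp only [hi, if_false]; unfold evF
        have h1 : Even ((i - 1).val) := (parity_pred h2 hn i).mpr hi
        simp [h1, sub_add_cancel]

lemma castHom_eq_val (h2 : 2 ∣ n) [NeZero n] (i : ZMod n) :
    ZMod.castHom h2 (ZMod 2) i = ((i.val : ℕ) : ZMod 2) := by
  rw [ZMod.castHom_apply, ZMod.natCast_val]

lemma castHom_even (h2 : 2 ∣ n) [NeZero n] {i : ZMod n} (hi : Even i.val) :
    ZMod.castHom h2 (ZMod 2) i = 0 := by
  rw [castHom_eq_val, ZMod.natCast_eq_zero_iff]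
  exact hi.two_dvd

lemma castHom_odd (h2 : 2 ∣ n) [NeZero n] {i : ZMod n} (hi : ¬ Even i.val) :
    ZMod.castHom h2 (ZMod 2) i = 1 := by
  rw [castHom_eq_val, ← ZMod.natCast_mod, Nat.not_even_iff.mp hi, Nat.cast_one]

lemma chiE_evF (h2 : 2 ∣ n) (hn : 2 ≤ n) [NeZero n] (x : DihedralGroup n) :
    chiE h2 (evF x) = phiE x := by
  rcases x with i | i <;> unfold evF <;> by_cases hi : Even i.val
  · simp only [hi, if_true]; exact castHom_even h2 hi
  · simp only [hi, if_false]
    exact castHom_even h2 ((parity_succ h2 hn i).mpr hi)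
  · simp only [hi, if_true]
    exact castHom_odd h2 (fun he => (parity_succ h2 hn i).mp he hi)
  · simp only [hi, if_false]; exact castHom_odd h2 hi

lemma even_case (n : ℕ) (hn4 : 4 ≤ n) (h2 : 2 ∣ n)
    (h : ∀ S : Set (DihedralGroup n), (1 : DihedralGroup n) ∉ S → IsCIDigraph S) :
    False := by
  have hn : 2 ≤ n := by omega
  have : NeZero n := ⟨by omega⟩
  have : Fact (1 < n) := ⟨by omega⟩
  have hS1 : (1 : DihedralGroup n) ∉ Se n := fun hx => hx.1 rfl
  have hT1 : (1 : DihedralGroup n) ∉ Te n h2 := fun hx => hx.1 rfl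
  have iso : Nonempty (cayRel (Se n) ≃r cayRel (Te n h2)) := ⟨{
    toEquiv := evFE h2 hn
    map_rel_iff' := by
      intro a b
      unfold cayRel
      rw [mem_Te_iff, mem_Se_iff]
      have hc : ∀ x, chiE h2 ((evFE h2 hn) x) = phiE x := fun x => chiE_evF h2 hn x
      rw [hc, hc, ne_eq, EmbeddingLike.apply_eq_iff_eq, ← ne_eq] }⟩
  obtain ⟨α, hα⟩ := h (Se n) hS1 (Te n h2) hT1 iso
  have hr1S : r 1 ∈ Se n := by
    refine ⟨fun hc => ?_, rfl⟩
    rw [one_def] at hc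
    injection hc with hc
    exact one_ne_zero hc
  have hmem : α (r 1) ∈ Te n h2 := hα ▸ Set.mem_image_of_mem α hr1S
  have hord : orderOf (α (r 1)) = n := by
    have := orderOf_injective α.toMonoidHom α.injective (r 1)
    simpa [orderOf_r_one] using this
  rcases hαr : α (r 1) with g | g
  · rw [hαr] at hmem hord
    obtain ⟨-, hchi⟩ := hmem
    have hdvd : 2 ∣ g.val := by
      rw [show chiE h2 (r g) = ZMod.castHom h2 (ZMod 2) g from rfl, castHom_eq_val,
        ZMod.natCast_eq_zero_iff] at hchi
      exact hchi
    obtain ⟨t, ht⟩ := hdvd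
    obtain ⟨u, rfl⟩ := h2
    have hu : 2 * u / 2 = u := Nat.mul_div_cancel_left u two_pos
    have hpow : (r g : DihedralGroup (2 * u)) ^ (2 * u / 2) = 1 := by
      have hg1 : (r g : DihedralGroup (2 * u)) = (r 1) ^ g.val := by
        rw [r_one_pow, ZMod.natCast_zmod_val]
      rw [hg1, ← pow_mul, ← orderOf_dvd_iff_pow_eq_one, orderOf_r_one, hu, ht]
      exact ⟨t, by ring⟩
    have hdvd2 : orderOf (r g : DihedralGroup (2 * u)) ∣ 2 * u / 2 :=
      orderOf_dvd_iff_pow_eq_one.mpr hpow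
    rw [hord, hu] at hdvd2
    have := Nat.le_of_dvd (by omega) hdvd2
    omega
  · rw [hαr, orderOf_sr] at hord
    omega

end S17

namespace S17O

variable (p k : ℕ)

/-- reduction mod `p` -/
def cp (hk : k ≠ 0) : ZMod (p ^ k) →+* ZMod p :=
  ZMod.castHom (dvd_pow_self p hk) (ZMod p)

variable {p k}

lemma knz (hk : 2 ≤ k) : k ≠ 0 := by omega

section core

variable (hp : p.Prime) (hp2 : p ≠ 2) (hk : 2 ≤ k)

def S0 (hk : 2 ≤ k) : Set (ZMod (p ^ k)) :=
  {x | cp p k (knz hk) x = 1} ∪ {((p : ℕ) : ZMod (p ^ k))}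

def T0 (hk : 2 ≤ k) : Set (ZMod (p ^ k)) :=
  {x | cp p k (knz hk) x = 1} ∪ {2 * ((p : ℕ) : ZMod (p ^ k))}

def sg (hk : 2 ≤ k) : ZMod (p ^ k) → ZMod (p ^ k) :=
  fun x => 2 * x - (((cp p k (knz hk) x).val : ℕ) : ZMod (p ^ k))

def tg (hk : 2 ≤ k) : ZMod (p ^ k) → ZMod (p ^ k) :=
  fun x => (x + (((cp p k (knz hk) x).val : ℕ) : ZMod (p ^ k))) * (2 : ZMod (p ^ k))⁻¹

-- basic instances
lemma pk_pos (hp : p.Prime) : 0 < p ^ k := Nat.pow_pos hp.pos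

omit hp2 hk in
include hp in
lemma cp_val (hk' : k ≠ 0) (x : ZMod (p ^ k)) :
    cp p k hk' ((((cp p k hk' x).val : ℕ) : ZMod (p ^ k))) = cp p k hk' x := by
  haveI : NeZero p := ⟨hp.ne_zero⟩
  rw [map_natCast, ZMod.natCast_zmod_val]

include hp in
lemma cp_sg (x : ZMod (p ^ k)) : cp p k (knz hk) (sg hk x) = cp p k (knz hk) x := by
  unfold sg
  rw [map_sub, map_mul, cp_val hp, map_ofNat]
  ring

include hp hp2 in
lemma unit2 : IsUnit (2 : ZMod (p ^ k)) := by
  haveI : NeZero (p ^ k) := ⟨(pk_pos hp).ne'⟩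
  rw [show ((2 : ZMod (p ^ k))) = ((2 : ℕ) : ZMod (p ^ k)) by norm_cast,
    ZMod.isUnit_iff_coprime]
  exact Nat.Coprime.pow_right _ (((Nat.coprime_primes Nat.prime_two hp).mpr
    (fun hc => hp2 hc.symm)))

include hp hp2 in
lemma sg_left (x : ZMod (p ^ k)) : tg hk (sg hk x) = x := by
  have hval : (cp p k (knz hk) (sg hk x)).val = (cp p k (knz hk) x).val := by
    rw [cp_sg hp hk]
  unfold tg
  rw [hval]
  unfold sg
  have h22 : (2 : ZMod (p ^ k)) * (2 : ZMod (p ^ k))⁻¹ = 1 :=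
    ZMod.mul_inv_of_unit _ (unit2 hp hp2)
  calc (2 * x - ↑(cp p k (knz hk) x).val + ↑(cp p k (knz hk) x).val) * (2 : ZMod (p ^ k))⁻¹
      = x * (2 * (2 : ZMod (p ^ k))⁻¹) := by ring
    _ = x := by rw [h22, mul_one]

include hp hp2 in
lemma cp_tg (y : ZMod (p ^ k)) : cp p k (knz hk) (tg hk y) = cp p k (knz hk) y := by
  have h22 : (2 : ZMod p) * cp p k (knz hk) ((2 : ZMod (p ^ k))⁻¹) = 1 := by
    rw [show (2 : ZMod p) = cp p k (knz hk) 2 by rw [map_ofNat], ← map_mul,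
      ZMod.mul_inv_of_unit _ (unit2 hp hp2), map_one]
  unfold tg
  rw [map_mul, map_add, cp_val hp]
  calc (cp p k (knz hk) y + cp p k (knz hk) y) * cp p k (knz hk) (2 : ZMod (p ^ k))⁻¹
      = cp p k (knz hk) y * (2 * cp p k (knz hk) ((2 : ZMod (p ^ k))⁻¹)) := by ring
    _ = cp p k (knz hk) y := by rw [h22, mul_one]

include hp hp2 in
lemma sg_right (y : ZMod (p ^ k)) : sg hk (tg hk y) = y := by
  have hval : (cp p k (knz hk) (tg hk y)).val = (cp p k (knz hk) y).val := by
    rw [cp_tg hp hp2 hk]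
  unfold sg
  rw [hval]
  unfold tg
  have h22 : (2 : ZMod (p ^ k)) * (2 : ZMod (p ^ k))⁻¹ = 1 :=
    ZMod.mul_inv_of_unit _ (unit2 hp hp2)
  calc 2 * ((y + ↑(cp p k (knz hk) y).val) * (2 : ZMod (p ^ k))⁻¹) - ↑(cp p k (knz hk) y).val
      = (y + ↑(cp p k (knz hk) y).val) * (2 * (2 : ZMod (p ^ k))⁻¹) -
          ↑(cp p k (knz hk) y).val := by ring
    _ = y := by rw [h22]; ring

/-- `sg` as an equiv. -/
def sgE (hp : p.Prime) (hp2 : p ≠ 2) (hk : 2 ≤ k) : ZMod (p ^ k) ≃ ZMod (p ^ k) :=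
  ⟨sg hk, tg hk, sg_left hp hp2 hk, sg_right hp hp2 hk⟩


include hp in
lemma cp_p (hk' : k ≠ 0) : cp p k hk' (((p : ℕ) : ZMod (p ^ k))) = 0 := by
  rw [map_natCast, ZMod.natCast_self]

include hp in
lemma one_ne_zero_p : (1 : ZMod p) ≠ 0 := by
  haveI : Fact (1 < p) := ⟨hp.one_lt⟩
  exact one_ne_zero

include hp hp2 in
lemma core_iff (a b : ZMod (p ^ k)) :
    sg hk b - sg hk a ∈ T0 hk ↔ b - a ∈ S0 hk := by
  haveI : NeZero p := ⟨hp.ne_zero⟩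
  set c := cp p k (knz hk) with hc
  have hdiff : sg hk b - sg hk a = 2 * (b - a) - (((c b).val : ZMod (p ^ k)) -
      ((c a).val : ZMod (p ^ k))) := by unfold sg; ring
  have hcdiff : c (sg hk b - sg hk a) = c (b - a) := by
    rw [map_sub, cp_sg hp hk, cp_sg hp hk, ← map_sub]
  by_cases h1 : c (b - a) = 1
  · constructor
    · intro _; exact Or.inl h1
    · intro _; left; show c _ = 1; rw [hcdiff]; exact h1
  · by_cases h0 : c (b - a) = 0
    · have hceq : ((c b).val : ZMod (p ^ k)) = ((c a).val : ZMod (p ^ k)) := by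
        have : c b = c a := by
          have := h0; rw [map_sub, sub_eq_zero] at this; rw [this]
        rw [this]
      have h2d : sg hk b - sg hk a = 2 * (b - a) := by rw [hdiff, hceq, sub_self, sub_zero]
      rw [h2d]
      constructor
      · rintro (hL | hR)
        · exfalso
          have : c (2 * (b - a)) = 1 := hL
          rw [map_mul, map_ofNat, h0, mul_zero] at this
          exact one_ne_zero_p hp this.symm
        · right
          have h2p : 2 * (b - a) = 2 * ((p : ℕ) : ZMod (p ^ k)) := hR
          have := (unit2 hp hp2).mul_left_cancel h2p
          simpa using this
      · rintro (hL | hR)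
        · exact absurd hL h1
        · right
          have : b - a = ((p : ℕ) : ZMod (p ^ k)) := hR
          rw [this]; rfl
    · constructor
      · rintro (hL | hR)
        · exfalso; apply h1; rw [← hcdiff]; exact hL
        · exfalso; apply h0
          have : c (sg hk b - sg hk a) = 0 := by
            rw [show sg hk b - sg hk a = 2 * ((p : ℕ) : ZMod (p ^ k)) from hR,
              map_mul, map_ofNat, cp_p hp, mul_zero]
          rw [← hcdiff]; exact this
      · rintro (hL | hR)
        · exact absurd hL h1
        · exfalso; apply h0
          rw [show b - a = ((p : ℕ) : ZMod (p ^ k)) from hR, cp_p hp]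

include hp hp2 in
lemma no_multiplier (w : ZMod (p ^ k)) (hw : (fun t => w * t) '' S0 hk = T0 hk) : False := by
  haveI : NeZero p := ⟨hp.ne_zero⟩
  set c := cp p k (knz hk) with hc
  have h1S : (1 : ZMod (p ^ k)) ∈ S0 hk := Or.inl (by show c 1 = 1; rw [map_one])
  have hpS : ((p : ℕ) : ZMod (p ^ k)) ∈ S0 hk := Or.inr rfl
  have hwT : w ∈ T0 hk := by
    rw [← hw]; exact ⟨1, h1S, mul_one w⟩
  have h1T : (1 : ZMod (p ^ k)) ∈ T0 hk := Or.inl (by show c 1 = 1; rw [map_one])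
  obtain ⟨s, hsS, hws⟩ : ∃ s ∈ S0 hk, w * s = 1 := by
    have := h1T; rw [← hw] at this; exact this
  have hwp : w * ((p : ℕ) : ZMod (p ^ k)) = 2 * ((p : ℕ) : ZMod (p ^ k)) := by
    have hmem : w * ((p : ℕ) : ZMod (p ^ k)) ∈ T0 hk := by
      rw [← hw]; exact ⟨_, hpS, rfl⟩
    rcases hmem with hL | hR
    · exfalso
      have : c (w * ((p : ℕ) : ZMod (p ^ k))) = 1 := hL
      rw [map_mul, cp_p hp, mul_zero] at this
      exact one_ne_zero_p hp this.symm
    · exact hR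
  have hcw : c w = 1 := by
    rcases hwT with hL | hR
    · exact hL
    · exfalso
      have hw2p : w = 2 * ((p : ℕ) : ZMod (p ^ k)) := hR
      have : c (w * s) = 1 := by rw [hws, map_one]
      rw [hw2p, map_mul, map_mul, map_ofNat, cp_p hp, mul_zero, zero_mul] at this
      exact one_ne_zero_p hp this.symm
  -- now (w - 2) * p = 0 in ZMod (p^k)
  have hsub : (w - 2) * ((p : ℕ) : ZMod (p ^ k)) = 0 := by
    rw [sub_mul, hwp]; ring
  haveI : NeZero (p ^ k) := ⟨(pk_pos hp).ne'⟩
  have hdvd : p ^ k ∣ (w - 2).val * p := by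
    rw [← ZMod.natCast_eq_zero_iff]
    push_cast
    rw [ZMod.natCast_zmod_val]
    exact hsub
  have hdvd2 : p ^ (k - 1) ∣ (w - 2).val := by
    have hrw : p ^ k = p ^ (k - 1) * p := by
      rw [← pow_succ]
      congr 1
      omega
    have hdvd' : p ^ (k - 1) * p ∣ (w - 2).val * p := by rw [← hrw]; exact hdvd
    exact (Nat.mul_dvd_mul_iff_right hp.pos).mp hdvd' 
  have hdvdp : p ∣ (w - 2).val :=
    dvd_trans (dvd_pow_self p (by omega : k - 1 ≠ 0)) hdvd2
  have hcw2 : c (w - 2) = 0 := by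
    have : (((w - 2).val : ℕ) : ZMod p) = 0 := by
      rw [ZMod.natCast_eq_zero_iff]; exact hdvdp
    rw [show c (w - 2) = (((w - 2).val : ℕ) : ZMod p) by
      rw [hc]; unfold cp; rw [ZMod.castHom_apply, ZMod.natCast_val]]
    exact this
  rw [map_sub, hcw, map_ofNat] at hcw2
  have h12 : (1 : ZMod p) = 2 := by
    have := hcw2; rwa [sub_eq_zero] at this
  have : (1 : ZMod p) = 0 := by
    have h2 : (2 : ZMod p) = 1 + 1 := by norm_num
    rw [h2] at h12
    calc (1 : ZMod p) = (1 + 1) - 1 := by ring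
      _ = 1 - 1 := by rw [← h12]
      _ = 0 := by ring
  exact one_ne_zero_p hp this

end core



open DihedralGroup

@[simp] lemma inv_r {n : ℕ} (i : ZMod n) : (r i)⁻¹ = r (-i) := rfl
@[simp] lemma inv_sr {n : ℕ} (i : ZMod n) : (sr i)⁻¹ = sr i := rfl

section odd

variable {p k m : ℕ} (hp : p.Prime) (hp2 : p ≠ 2) (hk : 2 ≤ k)
  (hco : (p ^ k).Coprime m)

include hp hk in
lemma p_lt_pk : p < p ^ k := by
  have h0 := hp.two_le
  have h1 : p ^ 2 ≤ p ^ k := Nat.pow_le_pow_right hp.pos hk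
  have h2 : p * p = p ^ 2 := (sq p).symm
  have h3 : 2 * p ≤ p * p := Nat.mul_le_mul_right p hp.two_le
  omega

include hp hk in
lemma p_ne_zero_zmod : ((p : ℕ) : ZMod (p ^ k)) ≠ 0 := by
  rw [Ne, ZMod.natCast_eq_zero_iff]
  intro hdvd
  have := Nat.le_of_dvd hp.pos hdvd
  have := p_lt_pk hp hk
  omega

include hp hp2 hk in
lemma two_p_ne_zero_zmod : 2 * ((p : ℕ) : ZMod (p ^ k)) ≠ 0 := by
  rw [show 2 * ((p : ℕ) : ZMod (p ^ k)) = (((2 * p : ℕ) : ℕ) : ZMod (p ^ k)) by push_cast; ring,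
    Ne, ZMod.natCast_eq_zero_iff]
  intro hdvd
  have h1 : p ^ 2 ≤ p ^ k := Nat.pow_le_pow_right hp.pos hk
  have h2 : p * p = p ^ 2 := (sq p).symm
  have h3 : 3 ≤ p := by have := hp.two_le; omega
  have h4 : 3 * p ≤ p * p := Nat.mul_le_mul_right p h3
  have h5 := Nat.le_of_dvd (by have := hp.pos; omega) hdvd
  omega

/-- the connection set inside `ZMod (p^k * m)` corresponding to `S0`. -/
def ESl (hk : 2 ≤ k) (hco : (p ^ k).Coprime m) : Set (ZMod (p ^ k * m)) :=
  {x | ((ZMod.chineseRemainder hco) x).1 ∈ S0 hk ∧ ((ZMod.chineseRemainder hco) x).2 = 0}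

def ETl (hk : 2 ≤ k) (hco : (p ^ k).Coprime m) : Set (ZMod (p ^ k * m)) :=
  {x | ((ZMod.chineseRemainder hco) x).1 ∈ T0 hk ∧ ((ZMod.chineseRemainder hco) x).2 = 0}

def ehat (hp : p.Prime) (hp2 : p ≠ 2) (hk : 2 ≤ k) (hco : (p ^ k).Coprime m) :
    ZMod (p ^ k * m) ≃ ZMod (p ^ k * m) :=
  (ZMod.chineseRemainder hco).toEquiv.trans
    (((sgE hp hp2 hk).prodCongr (Equiv.refl (ZMod m))).trans
      (ZMod.chineseRemainder hco).toEquiv.symm)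

lemma ehat_apply (x : ZMod (p ^ k * m)) :
    ehat hp hp2 hk hco x = (ZMod.chineseRemainder hco).symm
      (sg hk ((ZMod.chineseRemainder hco) x).1, ((ZMod.chineseRemainder hco) x).2) := rfl

include hp hp2 hk hco in
lemma key_iff (a b : ZMod (p ^ k * m)) :
    ehat hp hp2 hk hco b - ehat hp hp2 hk hco a ∈ ETl hk hco ↔ b - a ∈ ESl hk hco := by
  set φ := ZMod.chineseRemainder hco with hφdef
  have hφ : φ (ehat hp hp2 hk hco b - ehat hp hp2 hk hco a)
      = (sg hk (φ b).1 - sg hk (φ a).1, (φ b).2 - (φ a).2) := by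
    rw [map_sub, ehat_apply, ehat_apply, RingEquiv.apply_symm_apply,
      RingEquiv.apply_symm_apply]
    rfl
  show (φ _).1 ∈ T0 hk ∧ (φ _).2 = 0 ↔ (φ _).1 ∈ S0 hk ∧ (φ _).2 = 0
  rw [hφ, map_sub]
  exact and_congr (core_iff hp hp2 hk _ _) Iff.rfl

/-- dihedral equiv from two equivs on the index type -/
def dihE {N : ℕ} (e1 e2 : ZMod N ≃ ZMod N) : Equiv.Perm (DihedralGroup N) where
  toFun := fun x => match x with | .r i => .r (e1 i) | .sr i => .sr (e2 i)
  invFun := fun x => match x with | .r i => .r (e1.symm i) | .sr i => .sr (e2.symm i)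
  left_inv := by rintro (i | i) <;> simp
  right_inv := by rintro (i | i) <;> simp

lemma mem_r_image {N : ℕ} (A : Set (ZMod N)) (x : ZMod N) :
    (r x : DihedralGroup N) ∈ DihedralGroup.r '' A ↔ x ∈ A := by
  constructor
  · rintro ⟨y, hy, hxy⟩; injection hxy with hh; rwa [← hh]
  · intro hx; exact ⟨x, hx, rfl⟩

lemma sr_not_mem_r_image {N : ℕ} (A : Set (ZMod N)) (x : ZMod N) :
    (sr x : DihedralGroup N) ∉ DihedralGroup.r '' A := by
  rintro ⟨y, -, hxy⟩; exact absurd hxy (by simp)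

include hp hp2 hk hco in
lemma odd_case (hm : m ≠ 0)
    (h : ∀ S : Set (DihedralGroup (p ^ k * m)),
      (1 : DihedralGroup (p ^ k * m)) ∉ S → IsCIDigraph S) : False := by
  haveI : NeZero p := ⟨hp.ne_zero⟩
  haveI : NeZero (p ^ k) := ⟨(pk_pos (k := k) hp).ne'⟩
  haveI : NeZero m := ⟨hm⟩
  haveI : NeZero (p ^ k * m) := ⟨Nat.mul_ne_zero (pk_pos (k := k) hp).ne' hm⟩
  set φ := ZMod.chineseRemainder hco with hφdef
  set e1 := ehat hp hp2 hk hco with he1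
  set e2 := (Equiv.neg (ZMod (p ^ k * m))).trans
    (e1.trans (Equiv.neg (ZMod (p ^ k * m)))) with he2
  have he2ap : ∀ x, e2 x = -(e1 (-x)) := fun x => rfl
  set SD := DihedralGroup.r '' ESl hk hco with hSD
  set TD := DihedralGroup.r '' ETl hk hco with hTD
  have hφ0 : (φ (0 : ZMod (p ^ k * m))).1 = 0 := by rw [map_zero]; rfl
  have hS1 : (1 : DihedralGroup (p ^ k * m)) ∉ SD := by
    rw [one_def, hSD, mem_r_image]
    rintro ⟨hL | hR, -⟩
    · have h1 : cp p k (knz hk) ((φ (0 : ZMod (p ^ k * m))).1) = 1 := hL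
      rw [hφ0, map_zero] at h1
      exact one_ne_zero_p hp h1.symm
    · have h1 : (φ (0 : ZMod (p ^ k * m))).1 = ((p : ℕ) : ZMod (p ^ k)) := hR
      rw [hφ0] at h1
      exact p_ne_zero_zmod hp hk h1.symm
  have hT1 : (1 : DihedralGroup (p ^ k * m)) ∉ TD := by
    rw [one_def, hTD, mem_r_image]
    rintro ⟨hL | hR, -⟩
    · have h1 : cp p k (knz hk) ((φ (0 : ZMod (p ^ k * m))).1) = 1 := hL
      rw [hφ0, map_zero] at h1
      exact one_ne_zero_p hp h1.symm
    · have h1 : (φ (0 : ZMod (p ^ k * m))).1 = 2 * ((p : ℕ) : ZMod (p ^ k)) := hR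
      rw [hφ0] at h1
      exact two_p_ne_zero_zmod hp hp2 hk h1.symm
  have iso : Nonempty (cayRel SD ≃r cayRel TD) := by
    refine ⟨{ toEquiv := dihE e1 e2, map_rel_iff' := ?_ }⟩
    intro a b
    show cayRel TD (dihE e1 e2 a) (dihE e1 e2 b) ↔ cayRel SD a b
    unfold cayRel
    rcases a with i | i <;> rcases b with j | j
    · show (r (e1 j) * (r (e1 i))⁻¹ ∈ TD) ↔ (r j * (r i)⁻¹ ∈ SD)
      rw [inv_r, inv_r, r_mul_r, r_mul_r, hTD, hSD, mem_r_image, mem_r_image,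
        ← sub_eq_add_neg, ← sub_eq_add_neg]
      exact key_iff hp hp2 hk hco i j
    · show (sr (e2 j) * (r (e1 i))⁻¹ ∈ TD) ↔ (sr j * (r i)⁻¹ ∈ SD)
      rw [inv_r, inv_r, sr_mul_r, sr_mul_r, hTD, hSD]
      simp [sr_not_mem_r_image]
    · show (r (e1 j) * (sr (e2 i))⁻¹ ∈ TD) ↔ (r j * (sr i)⁻¹ ∈ SD)
      rw [inv_sr, inv_sr, r_mul_sr, r_mul_sr, hTD, hSD]
      simp [sr_not_mem_r_image]
    · show (sr (e2 j) * (sr (e2 i))⁻¹ ∈ TD) ↔ (sr j * (sr i)⁻¹ ∈ SD)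
      rw [inv_sr, inv_sr, sr_mul_sr, sr_mul_sr, hTD, hSD, mem_r_image, mem_r_image]
      have harg : e2 i - e2 j = e1 (-j) - e1 (-i) := by
        rw [he2ap, he2ap]; ring
      rw [harg]
      have := key_iff hp hp2 hk hco (-i) (-j)
      rw [show -j - -i = i - j by ring] at this
      exact this
  obtain ⟨α, hα⟩ := h SD hS1 TD hT1 iso
  -- α (r 1) is a rotation
  have hord : orderOf (α (r 1)) = p ^ k * m := by
    have := orderOf_injective α.toMonoidHom α.injective (r 1)
    simpa [orderOf_r_one] using this
  have hbig : 9 ≤ p ^ k * m := by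
    have h1 : p ^ 2 ≤ p ^ k := Nat.pow_le_pow_right hp.pos hk
    have h3 : 3 ≤ p := by have := hp.two_le; omega
    have h4 : 3 * 3 ≤ p * p := Nat.mul_le_mul h3 h3
    have h2 : p * p = p ^ 2 := (sq p).symm
    have h5 : p ^ k * 1 ≤ p ^ k * m := Nat.mul_le_mul_left _ (by omega)
    omega
  rcases hαr : α (r 1) with g | g
  swap
  · rw [hαr, orderOf_sr] at hord; omega
  -- action on rotations
  have hrx : ∀ x : ZMod (p ^ k * m), α (r x) = r (g * x) := by
    intro x
    have h1 : (r x : DihedralGroup (p ^ k * m)) = (r 1) ^ x.val := by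
      rw [r_one_pow, ZMod.natCast_zmod_val]
    rw [h1, map_pow, hαr]
    have h2 : (r g : DihedralGroup (p ^ k * m)) = (r 1) ^ g.val := by
      rw [r_one_pow, ZMod.natCast_zmod_val]
    rw [h2, ← pow_mul, r_one_pow]
    congr 1
    push_cast
    rw [ZMod.natCast_zmod_val, ZMod.natCast_zmod_val]
  have hET : ETl hk hco = (fun y => g * y) '' ESl hk hco := by
    ext y
    constructor
    · intro hy
      have hry : (r y : DihedralGroup (p ^ k * m)) ∈ TD := by
        rw [hTD]; exact (mem_r_image _ _).mpr hy
      rw [← hα] at hry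
      obtain ⟨x', hx'S, hx'⟩ := hry
      rw [hSD] at hx'S
      obtain ⟨x, hxES, rfl⟩ := hx'S
      rw [hrx] at hx'
      injection hx' with hgx
      exact ⟨x, hxES, hgx⟩
    · rintro ⟨x, hx, rfl⟩
      have : α (r x) ∈ α '' SD :=
        Set.mem_image_of_mem _ (by rw [hSD]; exact (mem_r_image _ _).mpr hx)
      rw [hα, hrx, hTD, mem_r_image] at this
      exact this
  -- extract the first coordinate multiplier
  have hw : (fun t => (φ g).1 * t) '' S0 hk = T0 hk := by
    ext t
    constructor
    · rintro ⟨s, hs, rfl⟩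
      have hxES : φ.symm (s, 0) ∈ ESl hk hco := by
        show (φ (φ.symm (s, 0))).1 ∈ S0 hk ∧ (φ (φ.symm (s, 0))).2 = 0
        rw [RingEquiv.apply_symm_apply]
        exact ⟨hs, rfl⟩
      have hmem : g * φ.symm (s, 0) ∈ ETl hk hco := by
        rw [hET]; exact Set.mem_image_of_mem _ hxES
      have h1 : (φ (g * φ.symm (s, 0))).1 ∈ T0 hk := hmem.1
      rwa [map_mul, RingEquiv.apply_symm_apply] at h1
    · intro ht
      have hyET : φ.symm (t, 0) ∈ ETl hk hco := by
        show (φ (φ.symm (t, 0))).1 ∈ T0 hk ∧ (φ (φ.symm (t, 0))).2 = 0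
        rw [RingEquiv.apply_symm_apply]
        exact ⟨ht, rfl⟩
      rw [hET] at hyET
      obtain ⟨x, hxES, hgx⟩ := hyET
      refine ⟨(φ x).1, hxES.1, ?_⟩
      have hφeq := congrArg φ hgx
      rw [map_mul, RingEquiv.apply_symm_apply] at hφeq
      exact congrArg Prod.fst hφeq
  exact no_multiplier hp hp2 hk _ hw

end odd

end S17O


set_option linter.unusedSectionVars false in
/-- If `D_{2n}` (`n ≥ 2`) is a DCI-group, then `n = 2` or `n` is odd
and square-free. -/
theorem stmt17 (n : ℕ) (hn : 2 ≤ n)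
    (h : ∀ S : Set (DihedralGroup n), (1 : DihedralGroup n) ∉ S → IsCIDigraph S) :
    n = 2 ∨ (Odd n ∧ Squarefree n) := by
  by_contra hcon
  push_neg at hcon
  obtain ⟨hne2, hOS⟩ := hcon
  rcases Nat.even_or_odd n with he | ho
  · obtain ⟨u, hu⟩ := he
    exact S17.even_case n (by omega) ⟨u, by omega⟩ h
  · have hsq : ¬ Squarefree n := hOS ho
    rw [Nat.squarefree_iff_prime_squarefree] at hsq
    push_neg at hsq
    obtain ⟨p, hpp, hpdvd⟩ := hsq
    have hp : p.Prime := hpp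
    have hp2 : p ≠ 2 := by
      rintro rfl
      have h2 : (2 : ℕ) ∣ n := dvd_trans ⟨2, rfl⟩ hpdvd
      rw [Nat.odd_iff] at ho
      omega
    have hk2 : 2 ≤ n.factorization p :=
      (Nat.Prime.pow_dvd_iff_le_factorization hp (by omega)).mp (by rwa [pow_two])
    have hm : n = p ^ (n.factorization p) * (n / p ^ (n.factorization p)) :=
      (Nat.ordProj_mul_ordCompl_eq_self n p).symm
    have hco : (p ^ (n.factorization p)).Coprime (n / p ^ (n.factorization p)) :=
      Nat.Coprime.pow_left _ (Nat.coprime_ordCompl hp (by omega))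
    have hmne : n / p ^ (n.factorization p) ≠ 0 :=
      (Nat.ordCompl_pos p (by omega : n ≠ 0)).ne'
    rw [hm] at h
    exact S17O.odd_case hp hp2 hk2 hco hmne h
end
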